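/- arXiv:math/0405543 — 4 statements merged into one kernel-verified Lean document; each statement's English description precedes it below -/
import Mathlib

section
/- The Carlitz polynomial e_i(t) = ∏_{m ∈ F_q[x], deg m < i} (t - m) (with e_0(t) = t) satisfies the expansion e_i(t) = Σ_{j=0}^{i} (-1)^{i-j} (D_i / (D_j L_{i-j}^{q^j})) t^{q^j}. -/
noncomputable section

/-- `[i] = x^{q^i} - x`. -/
def brk {K : Type*} [CommRing K] (q : ℕ) (x : K) (i : ℕ) : K := x ^ q ^ i - x

/-- Carlitz factorial: `D_0 = 1`, `D_i = [i] D_{i-1}^q`. -/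
def Dfac {K : Type*} [CommRing K] (q : ℕ) (x : K) : ℕ → K
  | 0 => 1
  | i + 1 => brk q x (i + 1) * (Dfac q x i) ^ q

/-- `L_0 = 1`, `L_i = [i] L_{i-1}`. -/
def Lfac {K : Type*} [CommRing K] (q : ℕ) (x : K) : ℕ → K
  | 0 => 1
  | i + 1 => brk q x (i + 1) * Lfac q x i

/-- The Carlitz polynomial `e_i(t) = ∏_{m ∈ F_q[x], deg m < i} (t - m)`, the product being
over all polynomials `m` of degree `< i` (encoded by their coefficient tuples `c : Fin i → F`),
viewed as a polynomial in `t` over a field `K` containing `F` with a distinguished element `x`. -/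
def carlitzE (F : Type*) [Field F] [Fintype F] {K : Type*} [Field K] [Algebra F K]
    (x : K) (i : ℕ) : Polynomial K :=
  ∏ c : Fin i → F,
    (Polynomial.X - Polynomial.C (∑ j : Fin i, algebraMap F K (c j) * x ^ (j : ℕ)))

section CarlitzAux
open Polynomial

theorem prodXsubC (F : Type*) [Field F] [Fintype F] :
    ∏ a : F, (X - C a) = X ^ Fintype.card F - X := by
  classical
  have hmon : (X ^ Fintype.card F - X : F[X]).Monic := by
    apply Polynomial.monic_X_pow_sub
    simpa using Fintype.one_lt_card
  have hsplit : Splits (X ^ Fintype.card F - X : F[X]) := by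
    rw [Polynomial.splits_iff_card_roots, FiniteField.roots_X_pow_card_sub_X,
      FiniteField.X_pow_card_sub_X_natDegree_eq F Fintype.one_lt_card]
    simp
  have := hsplit.eq_prod_roots_of_monic hmon
  rw [FiniteField.roots_X_pow_card_sub_X] at this
  rw [this, Finset.prod_eq_multiset_prod]

theorem prod_sub_scale {F K : Type*} [Field F] [Fintype F] [Field K] [Algebra F K]
    (q : ℕ) (hq : q = Fintype.card F) (d : K) (P : K[X]) :
    ∏ a : F, (P - C (algebraMap F K a * d)) = P ^ q - C (d ^ (q - 1)) * P := by
  classical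
  have hq2 : 2 ≤ q := by rw [hq]; exact Fintype.one_lt_card
  subst hq
  rcases eq_or_ne d 0 with rfl | hd
  · simp [zero_pow (by omega : Fintype.card F - 1 ≠ 0)]
  · have base := congrArg (Polynomial.aeval (R := F) (C d⁻¹ * P)) (prodXsubC F)
    rw [map_prod, map_sub, map_pow, Polynomial.aeval_X] at base
    simp only [map_sub, Polynomial.aeval_X, Polynomial.aeval_C] at base
    have hC : ∀ a : F, (algebraMap F K[X]) a = C (algebraMap F K a) := fun a => rfl
    simp only [hC] at base
    have hfac : ∀ a : F, C (d⁻¹) * P - C (algebraMap F K a)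
        = C (d⁻¹) * (P - C (algebraMap F K a * d)) := by
      intro a
      rw [mul_sub, ← C_mul]
      congr 2
      field_simp
    simp only [hfac] at base
    rw [Finset.prod_mul_distrib, Finset.prod_const, Finset.card_univ] at base
    have hCd : (C (d⁻¹) : K[X]) ^ Fintype.card F ≠ 0 := by
      simp [pow_ne_zero_iff, hd]
    apply mul_left_cancel₀ hCd
    rw [base, mul_pow, mul_sub]
    congr 1
    rw [← mul_assoc]
    congr 1
    rw [← C_pow, ← C_mul]
    congr 1
    rw [inv_pow]
    field_simp
    rw [← pow_succ']
    congr 1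
    omega

section Infra
variable {F : Type*} [Field F] [Fintype F] (q : ℕ) (hq : q = Fintype.card F)
include hq

theorem ratfunc_char : ∃ p k : ℕ, Nat.Prime p ∧ q = p ^ k ∧ CharP (RatFunc F) p := by
  haveI := ringChar.charP F
  obtain ⟨n, hp, hcard⟩ := FiniteField.card F (ringChar F)
  exact ⟨ringChar F, n, hp, by rw [hq, hcard],
    charP_of_injective_algebraMap' F (A := RatFunc F) (ringChar F)⟩

theorem hq2 : 2 ≤ q := by rw [hq]; exact Fintype.one_lt_card

/-- `(a+b)^(q^j) = a^(q^j) + b^(q^j)` style facts. -/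
theorem Kq_sub_pow (a b : RatFunc F) (j : ℕ) : (a - b) ^ q ^ j = a ^ q ^ j - b ^ q ^ j := by
  obtain ⟨p, k, hp, hqpk, hchar⟩ := ratfunc_char q hq
  haveI := hchar
  haveI := Fact.mk hp
  rw [hqpk, ← pow_mul]
  exact sub_pow_char_pow (p := p) a b _

theorem Kq_sum_pow {ι : Type*} (s : Finset ι) (f : ι → RatFunc F) (j : ℕ) :
    (∑ i ∈ s, f i) ^ q ^ j = ∑ i ∈ s, f i ^ q ^ j := by
  obtain ⟨p, k, hp, hqpk, hchar⟩ := ratfunc_char q hq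
  haveI := hchar
  haveI := Fact.mk hp
  rw [hqpk, ← pow_mul]
  exact sum_pow_char_pow (R := RatFunc F) p (k*j) s f

theorem Kq_neg_one_pow (j : ℕ) : ((-1 : RatFunc F)) ^ q ^ j = -1 := by
  obtain ⟨p, k, hp, hqpk, hchar⟩ := ratfunc_char q hq
  haveI := hchar
  haveI := Fact.mk hp
  rw [hqpk, ← pow_mul]
  exact neg_one_pow_char_pow (RatFunc F) p (k*j)

theorem Kq_sign_pow (m j : ℕ) : (((-1 : RatFunc F)) ^ m) ^ q ^ j = (-1) ^ m := by
  rw [← pow_mul, mul_comm, pow_mul, Kq_neg_one_pow q hq]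

theorem PKq_sub_pow (a b : (RatFunc F)[X]) (j : ℕ) :
    (a - b) ^ q ^ j = a ^ q ^ j - b ^ q ^ j := by
  obtain ⟨p, k, hp, hqpk, hchar⟩ := ratfunc_char q hq
  haveI := hchar
  haveI : CharP (RatFunc F)[X] p := charP_of_injective_ringHom (C_injective) p
  haveI := Fact.mk hp
  rw [hqpk, ← pow_mul]
  exact sub_pow_char_pow (p := p) a b _

theorem PKq_sum_pow {ι : Type*} (s : Finset ι) (f : ι → (RatFunc F)[X]) (j : ℕ) :
    (∑ i ∈ s, f i) ^ q ^ j = ∑ i ∈ s, f i ^ q ^ j := by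
  obtain ⟨p, k, hp, hqpk, hchar⟩ := ratfunc_char q hq
  haveI := hchar
  haveI : CharP (RatFunc F)[X] p := charP_of_injective_ringHom (C_injective) p
  haveI := Fact.mk hp
  rw [hqpk, ← pow_mul]
  exact sum_pow_char_pow (R := (RatFunc F)[X]) p (k*j) s f

theorem alg_pow_q (a : F) (j : ℕ) :
    (algebraMap F (RatFunc F) a) ^ q ^ j = algebraMap F (RatFunc F) a := by
  rw [← map_pow, hq, FiniteField.pow_card_pow]

theorem brk_ne_zero {i : ℕ} (hi : i ≠ 0) : brk q (RatFunc.X : RatFunc F) i ≠ 0 := by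
  have h2 := hq2 q hq
  unfold brk
  rw [sub_ne_zero]
  have : (RatFunc.X : RatFunc F) = algebraMap (Polynomial F) (RatFunc F) Polynomial.X := rfl
  rw [this, ← map_pow]
  intro h
  have := RatFunc.algebraMap_injective F h
  apply_fun Polynomial.natDegree at this
  rw [Polynomial.natDegree_X_pow, Polynomial.natDegree_X] at this
  have : 2 ≤ q ^ i := le_trans h2 (Nat.le_self_pow hi q)
  omega

theorem Dfac_ne_zero (i : ℕ) : Dfac q (RatFunc.X : RatFunc F) i ≠ 0 := by
  induction i with
  | zero => simp [Dfac]
  | succ n ih =>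
    simp only [Dfac]
    exact mul_ne_zero (brk_ne_zero q hq (Nat.succ_ne_zero n)) (pow_ne_zero _ ih)

theorem Lfac_ne_zero (i : ℕ) : Lfac q (RatFunc.X : RatFunc F) i ≠ 0 := by
  induction i with
  | zero => simp [Lfac]
  | succ n ih =>
    simp only [Lfac]
    exact mul_ne_zero (brk_ne_zero q hq (Nat.succ_ne_zero n)) ih

theorem brk_add (u v : ℕ) (hu : u ≠ 0) (hv : v ≠ 0) :
    brk q (RatFunc.X : RatFunc F) (u + v)
      = brk q (RatFunc.X : RatFunc F) u + (brk q (RatFunc.X : RatFunc F) v) ^ q ^ u := by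
  unfold brk
  rw [Kq_sub_pow q hq, ← pow_mul, ← pow_add]
  rw [Nat.add_comm v u]
  ring

def coefA {K : Type*} [Field K] (q : ℕ) (x : K) (n j : ℕ) : K :=
  (-1) ^ (n - j) * Dfac q x n / (Dfac q x j * Lfac q x (n - j) ^ q ^ j)

theorem sign_pow_q (m : ℕ) : (((-1 : RatFunc F)) ^ m) ^ q = (-1) ^ m := by
  have := Kq_sign_pow q hq m 1
  rwa [pow_one] at this

theorem coefA_diag (n : ℕ) : coefA q (RatFunc.X : RatFunc F) n n = 1 := by
  unfold coefA
  rw [Nat.sub_self]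
  simp only [pow_zero, one_mul, Lfac, one_pow, mul_one]
  exact div_self (Dfac_ne_zero q hq n)

theorem coefA_zero (n : ℕ) :
    coefA q (RatFunc.X : RatFunc F) (n + 1) 0
      = -(Dfac q (RatFunc.X : RatFunc F) n ^ (q - 1) * coefA q (RatFunc.X : RatFunc F) n 0) := by
  have h2 := hq2 q hq
  unfold coefA
  simp only [Nat.sub_zero, pow_zero, pow_one, Dfac, Lfac]
  have hb := brk_ne_zero q hq (Nat.succ_ne_zero n)
  have hL := Lfac_ne_zero q hq n
  have hD := Dfac_ne_zero q hq n
  have hDq : Dfac q (RatFunc.X : RatFunc F) n ^ q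
      = Dfac q (RatFunc.X : RatFunc F) n ^ (q - 1) * Dfac q (RatFunc.X : RatFunc F) n :=
    (pow_sub_one_mul (by omega) _).symm
  rw [pow_succ]
  field_simp
  rw [hDq]

theorem coefA_mid {n j : ℕ} (hj : j < n) :
    coefA q (RatFunc.X : RatFunc F) n j ^ q
      - Dfac q (RatFunc.X : RatFunc F) n ^ (q - 1) * coefA q (RatFunc.X : RatFunc F) n (j + 1)
      = coefA q (RatFunc.X : RatFunc F) (n + 1) (j + 1) := by
  have h2 := hq2 q hq
  set x := (RatFunc.X : RatFunc F) with hx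
  obtain ⟨m, hm⟩ : ∃ m, n = j + m + 1 := ⟨n - j - 1, by omega⟩
  have h1 : n - j = m + 1 := by omega
  have h2' : n - (j + 1) = m := by omega
  have h3 : n + 1 - (j + 1) = m + 1 := by omega
  unfold coefA
  rw [h1, h2', h3]
  simp only [Dfac, Lfac]
  have hbadd : brk q x (n + 1) = brk q x (j + 1) + brk q x (m + 1) ^ q ^ (j + 1) := by
    have hn1 : n + 1 = (j + 1) + (m + 1) := by omega
    rw [hn1, brk_add q hq (j + 1) (m + 1) (Nat.succ_ne_zero j) (Nat.succ_ne_zero m)]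
  rw [hbadd]
  have hA : ((-1 : RatFunc F) ^ (m + 1) * Dfac q x n) ^ q
      = (-1) ^ (m + 1) * (Dfac q x n ^ (q - 1) * Dfac q x n) := by
    rw [mul_pow, sign_pow_q q hq, pow_sub_one_mul (by omega : q ≠ 0)]
  have hB : (Dfac q x j * (brk q x (m + 1) * Lfac q x m) ^ q ^ j) ^ q
      = Dfac q x j ^ q * (brk q x (m + 1) ^ q ^ (j + 1) * Lfac q x m ^ q ^ (j + 1)) := by
    rw [mul_pow, ← pow_mul, ← pow_succ, mul_pow]
  have hC : (brk q x (m + 1) * Lfac q x m) ^ q ^ (j + 1)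
      = brk q x (m + 1) ^ q ^ (j + 1) * Lfac q x m ^ q ^ (j + 1) := mul_pow _ _ _
  have hD : Dfac q x n ^ q = Dfac q x n ^ (q - 1) * Dfac q x n :=
    (pow_sub_one_mul (by omega) _).symm
  rw [div_pow, hA, hB, hC, hD]
  have hb1 : brk q x (j + 1) ≠ 0 := brk_ne_zero q hq (Nat.succ_ne_zero j)
  have hb2 : brk q x (m + 1) ^ q ^ (j + 1) ≠ 0 :=
    pow_ne_zero _ (brk_ne_zero q hq (Nat.succ_ne_zero m))
  have hLm : Lfac q x m ^ q ^ (j + 1) ≠ 0 := pow_ne_zero _ (Lfac_ne_zero q hq m)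
  have hDj : Dfac q x j ^ q ≠ 0 := pow_ne_zero _ (Dfac_ne_zero q hq j)
  rw [pow_succ ((-1 : RatFunc F)) m]
  field_simp
  ring

theorem coefA_eval {n j : ℕ} (hj : j ≤ n) :
    brk q (RatFunc.X : RatFunc F) (j + 1) * coefA q (RatFunc.X : RatFunc F) (n + 1) (j + 1)
      = brk q (RatFunc.X : RatFunc F) (n + 1) * coefA q (RatFunc.X : RatFunc F) n j ^ q := by
  have h2 := hq2 q hq
  set x := (RatFunc.X : RatFunc F) with hx
  have h1 : n + 1 - (j + 1) = n - j := by omega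
  unfold coefA
  rw [h1]
  simp only [Dfac]
  have hA : ((-1 : RatFunc F) ^ (n - j) * Dfac q x n) ^ q
      = (-1) ^ (n - j) * Dfac q x n ^ q := by
    rw [mul_pow, sign_pow_q q hq]
  have hB : (Dfac q x j * Lfac q x (n - j) ^ q ^ j) ^ q
      = Dfac q x j ^ q * Lfac q x (n - j) ^ q ^ (j + 1) := by
    rw [mul_pow, ← pow_mul, ← pow_succ]
  rw [div_pow, hA, hB]
  have hb1 : brk q x (j + 1) ≠ 0 := brk_ne_zero q hq (Nat.succ_ne_zero j)
  have hbn : brk q x (n + 1) ≠ 0 := brk_ne_zero q hq (Nat.succ_ne_zero n)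
  have hLm : Lfac q x (n - j) ^ q ^ (j + 1) ≠ 0 := pow_ne_zero _ (Lfac_ne_zero q hq _)
  have hDj : Dfac q x j ^ q ≠ 0 := pow_ne_zero _ (Dfac_ne_zero q hq j)
  field_simp

theorem carlitzE_succ {n : ℕ}
    (hF : carlitzE F (RatFunc.X : RatFunc F) n
      = ∑ j ∈ Finset.range (n + 1), C (coefA q (RatFunc.X : RatFunc F) n j) * X ^ q ^ j)
    (hE : eval ((RatFunc.X : RatFunc F) ^ n) (carlitzE F (RatFunc.X : RatFunc F) n)
      = Dfac q (RatFunc.X : RatFunc F) n) :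
    carlitzE F (RatFunc.X : RatFunc F) (n + 1)
      = carlitzE F (RatFunc.X : RatFunc F) n ^ q
        - C (Dfac q (RatFunc.X : RatFunc F) n ^ (q - 1))
          * carlitzE F (RatFunc.X : RatFunc F) n := by
  classical
  set x := (RatFunc.X : RatFunc F) with hx
  -- Step A : split the product
  have hsplit : carlitzE F x (n + 1)
      = ∏ a : F, ∏ c : Fin n → F,
          ((X - C (algebraMap F (RatFunc F) a * x ^ n))
            - C (∑ j : Fin n, algebraMap F (RatFunc F) (c j) * x ^ (j : ℕ))) := by
    rw [carlitzE]
    rw [← Fintype.prod_equiv (Fin.snocEquiv (fun _ => F))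
      (fun p => X - C (∑ j : Fin (n + 1),
        algebraMap F (RatFunc F) ((Fin.snocEquiv (fun _ => F) p) j) * x ^ (j : ℕ)))
      (fun c => X - C (∑ j : Fin (n + 1), algebraMap F (RatFunc F) (c j) * x ^ (j : ℕ)))
      (fun p => rfl)]
    rw [Fintype.prod_prod_type]
    apply Finset.prod_congr rfl
    intro a _
    apply Finset.prod_congr rfl
    intro c _
    rw [Fin.sum_univ_castSucc]
    simp only [Fin.snocEquiv_apply, Fin.snoc_castSucc, Fin.snoc_last, Fin.coe_castSucc,
      Fin.val_last]
    rw [map_add]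
    ring
  -- Step B : each inner product equals `e n - C (a * D n)`
  have hinner : ∀ a : F,
      (∏ c : Fin n → F,
          ((X - C (algebraMap F (RatFunc F) a * x ^ n))
            - C (∑ j : Fin n, algebraMap F (RatFunc F) (c j) * x ^ (j : ℕ))))
        = carlitzE F x n - C (algebraMap F (RatFunc F) a * Dfac q x n) := by
    intro a
    have hcomp : (∏ c : Fin n → F,
          ((X - C (algebraMap F (RatFunc F) a * x ^ n))
            - C (∑ j : Fin n, algebraMap F (RatFunc F) (c j) * x ^ (j : ℕ))))
        = (carlitzE F x n).comp (X - C (algebraMap F (RatFunc F) a * x ^ n)) := by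
      rw [carlitzE, prod_comp]
      apply Finset.prod_congr rfl
      intro c _
      simp [sub_comp]
    rw [hcomp, hF, sum_comp]
    have hterm : ∀ j : ℕ,
        (C (coefA q x n j) * X ^ q ^ j).comp (X - C (algebraMap F (RatFunc F) a * x ^ n))
          = C (coefA q x n j) * X ^ q ^ j
            - C (algebraMap F (RatFunc F) a * (coefA q x n j * (x ^ n) ^ q ^ j)) := by
      intro j
      rw [mul_comp, C_comp, pow_comp, X_comp, PKq_sub_pow q hq, ← C_pow, mul_pow]
      rw [alg_pow_q q hq]
      rw [mul_sub, ← C_mul, mul_left_comm]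
    simp only [hterm]
    rw [Finset.sum_sub_distrib, ← hF]
    congr 1
    rw [← map_sum C]
    congr 1
    rw [← Finset.mul_sum]
    congr 1
    rw [← hE, hF]
    simp [eval_finset_sum]
  rw [hsplit]
  calc ∏ a : F, ∏ c : Fin n → F,
        ((X - C (algebraMap F (RatFunc F) a * x ^ n))
          - C (∑ j : Fin n, algebraMap F (RatFunc F) (c j) * x ^ (j : ℕ)))
      = ∏ a : F, (carlitzE F x n - C (algebraMap F (RatFunc F) a * Dfac q x n)) :=
        Finset.prod_congr rfl fun a _ => hinner a
    _ = _ := prod_sub_scale q hq (Dfac q x n) (carlitzE F x n)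

theorem formula_succ {n : ℕ}
    (hF : carlitzE F (RatFunc.X : RatFunc F) n
      = ∑ j ∈ Finset.range (n + 1), C (coefA q (RatFunc.X : RatFunc F) n j) * X ^ q ^ j)
    (hE : eval ((RatFunc.X : RatFunc F) ^ n) (carlitzE F (RatFunc.X : RatFunc F) n)
      = Dfac q (RatFunc.X : RatFunc F) n) :
    carlitzE F (RatFunc.X : RatFunc F) (n + 1)
      = ∑ j ∈ Finset.range (n + 2), C (coefA q (RatFunc.X : RatFunc F) (n + 1) j) * X ^ q ^ j := by
  have h2 := hq2 q hq
  set x := (RatFunc.X : RatFunc F) with hx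
  rw [carlitzE_succ q hq hF hE]
  nth_rewrite 1 [hF]
  have hpow : (∑ j ∈ Finset.range (n + 1), C (coefA q x n j) * X ^ q ^ j) ^ q
      = ∑ j ∈ Finset.range (n + 1), C (coefA q x n j ^ q) * X ^ q ^ (j + 1) := by
    have := PKq_sum_pow q hq (Finset.range (n + 1))
      (fun j => C (coefA q x n j) * X ^ q ^ j) 1
    rw [pow_one] at this
    rw [this]
    apply Finset.sum_congr rfl
    intro j _
    rw [mul_pow, ← C_pow, ← pow_mul, ← pow_succ]
  rw [hpow, hF, Finset.mul_sum]
  simp only [← mul_assoc, ← map_mul]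
  rw [Finset.sum_range_succ
    (fun j => C (coefA q x n j ^ q) * X ^ q ^ (j + 1)) n]
  rw [Finset.sum_range_succ'
    (fun j => C (Dfac q x n ^ (q - 1) * coefA q x n j) * X ^ q ^ j) n]
  rw [Finset.sum_range_succ'
    (fun j => C (coefA q x (n + 1) j) * X ^ q ^ j) (n + 1)]
  rw [Finset.sum_range_succ
    (fun j => C (coefA q x (n + 1) (j + 1)) * X ^ q ^ (j + 1)) n]
  have h1 : (∑ j ∈ Finset.range n, C (coefA q x n j ^ q) * X ^ q ^ (j + 1))
      - ∑ j ∈ Finset.range n, C (Dfac q x n ^ (q - 1) * coefA q x n (j + 1)) * X ^ q ^ (j + 1)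
      = ∑ j ∈ Finset.range n, C (coefA q x (n + 1) (j + 1)) * X ^ q ^ (j + 1) := by
    rw [← Finset.sum_sub_distrib]
    apply Finset.sum_congr rfl
    intro j hj
    rw [← sub_mul, ← map_sub, coefA_mid q hq (Finset.mem_range.mp hj)]
  have h2' : C (coefA q x n n ^ q) * X ^ q ^ (n + 1)
      = C (coefA q x (n + 1) (n + 1)) * X ^ q ^ (n + 1) := by
    rw [coefA_diag q hq, one_pow, coefA_diag q hq]
  have h3 : C (coefA q x (n + 1) 0) * X ^ q ^ 0
      = -(C (Dfac q x n ^ (q - 1) * coefA q x n 0) * X ^ q ^ 0) := by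
    rw [coefA_zero q hq, map_neg, neg_mul]
  linear_combination h1 + h2' - h3

theorem brk_zero : brk q (RatFunc.X : RatFunc F) 0 = 0 := by
  simp [brk]

theorem eval_succ {n : ℕ}
    (hF : carlitzE F (RatFunc.X : RatFunc F) n
      = ∑ j ∈ Finset.range (n + 1), C (coefA q (RatFunc.X : RatFunc F) n j) * X ^ q ^ j)
    (hE : eval ((RatFunc.X : RatFunc F) ^ n) (carlitzE F (RatFunc.X : RatFunc F) n)
      = Dfac q (RatFunc.X : RatFunc F) n) :
    eval ((RatFunc.X : RatFunc F) ^ (n + 1)) (carlitzE F (RatFunc.X : RatFunc F) (n + 1))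
      = Dfac q (RatFunc.X : RatFunc F) (n + 1) := by
  classical
  have hF1 := formula_succ q hq hF hE
  set x := (RatFunc.X : RatFunc F) with hx
  -- x^n is a root of e_{n+1}
  have heval0 : eval (x ^ n) (carlitzE F x (n + 1)) = 0 := by
    rw [carlitzE, eval_prod]
    apply Finset.prod_eq_zero (Finset.mem_univ (Pi.single (Fin.last n) (1 : F)))
    rw [eval_sub, eval_X, eval_C, sub_eq_zero]
    rw [Finset.sum_eq_single (Fin.last n)]
    · simp
    · intro j _ hj
      rw [Pi.single_eq_of_ne hj, map_zero, zero_mul]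
    · simp
  have heval0' : ∑ j ∈ Finset.range (n + 2), coefA q x (n + 1) j * (x ^ n) ^ q ^ j = 0 := by
    rw [← heval0, hF1]
    simp [eval_finset_sum]
  rw [hF1]
  rw [eval_finset_sum]
  simp only [eval_mul, eval_C, eval_pow, eval_X]
  have hterm : ∀ j : ℕ,
      coefA q x (n + 1) j * (x ^ (n + 1)) ^ q ^ j
        = x * (coefA q x (n + 1) j * (x ^ n) ^ q ^ j)
          + brk q x j * coefA q x (n + 1) j * (x ^ n) ^ q ^ j := by
    intro j
    have hxq : x ^ q ^ j = brk q x j + x := by rw [brk]; ring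
    calc coefA q x (n + 1) j * (x ^ (n + 1)) ^ q ^ j
        = coefA q x (n + 1) j * ((x ^ n) ^ q ^ j * x ^ q ^ j) := by
          rw [← mul_pow, ← pow_succ]
      _ = _ := by rw [hxq]; ring
  simp only [hterm]
  rw [Finset.sum_add_distrib, ← Finset.mul_sum, heval0', mul_zero, zero_add]
  rw [Finset.sum_range_succ'
    (fun j => brk q x j * coefA q x (n + 1) j * (x ^ n) ^ q ^ j) (n + 1)]
  rw [brk_zero q hq, zero_mul, zero_mul, add_zero]
  have hterm2 : ∀ j ∈ Finset.range (n + 1),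
      brk q x (j + 1) * coefA q x (n + 1) (j + 1) * (x ^ n) ^ q ^ (j + 1)
        = brk q x (n + 1) * (coefA q x n j * (x ^ n) ^ q ^ j) ^ q := by
    intro j hj
    rw [coefA_eval q hq (Nat.lt_succ_iff.mp (Finset.mem_range.mp hj))]
    have hpp : ((x ^ n) ^ q ^ j) ^ q = (x ^ n) ^ q ^ (j + 1) := by
      rw [← pow_mul, ← pow_succ]
    rw [mul_pow, hpp]
    ring
  rw [Finset.sum_congr rfl hterm2, ← Finset.mul_sum]
  have hsum : ∑ j ∈ Finset.range (n + 1), (coefA q x n j * (x ^ n) ^ q ^ j) ^ q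
      = (∑ j ∈ Finset.range (n + 1), coefA q x n j * (x ^ n) ^ q ^ j) ^ q := by
    have := Kq_sum_pow q hq (Finset.range (n + 1))
      (fun j => coefA q x n j * (x ^ n) ^ q ^ j) 1
    rw [pow_one] at this
    rw [this]
  rw [hsum]
  have : ∑ j ∈ Finset.range (n + 1), coefA q x n j * (x ^ n) ^ q ^ j = Dfac q x n := by
    rw [← hE, hF]
    simp [eval_finset_sum]
  rw [this]
  rfl

theorem carlitz_main (n : ℕ) :
    (carlitzE F (RatFunc.X : RatFunc F) n
      = ∑ j ∈ Finset.range (n + 1), C (coefA q (RatFunc.X : RatFunc F) n j) * X ^ q ^ j)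
    ∧ eval ((RatFunc.X : RatFunc F) ^ n) (carlitzE F (RatFunc.X : RatFunc F) n)
      = Dfac q (RatFunc.X : RatFunc F) n := by
  induction n with
  | zero =>
    constructor
    · rw [carlitzE, Finset.sum_range_one, coefA_diag q hq, map_one, one_mul, pow_zero, pow_one]
      rw [Fintype.prod_unique]
      simp
    · rw [carlitzE, Fintype.prod_unique]
      simp [Dfac]
  | succ n ih =>
    exact ⟨formula_succ q hq ih.1 ih.2, eval_succ q hq ih.1 ih.2⟩

end Infra

end CarlitzAux

/-- `e_i(t) = Σ_{j=0}^{i} (-1)^{i-j} (D_i / (D_j L_{i-j}^{q^j})) t^{q^j}` over `F_q(x)`. -/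
theorem carlitzE_expansion {F : Type*} [Field F] [Fintype F]
    (q : ℕ) (hq : q = Fintype.card F) (i : ℕ) :
    carlitzE F (RatFunc.X : RatFunc F) i
      = ∑ j ∈ Finset.range (i + 1),
          Polynomial.C ((-1) ^ (i - j) * Dfac q (RatFunc.X : RatFunc F) i
              / (Dfac q (RatFunc.X : RatFunc F) j
                  * (Lfac q (RatFunc.X : RatFunc F) (i - j)) ^ q ^ j))
            * Polynomial.X ^ q ^ j := by
  have h := (carlitz_main q hq i).1
  simpa only [coefA] using h
end
end

section
/- The Carlitz module polynomials C_s(z) = Σ_{i=0}^{deg s} (e_i(s)/D_i) z^{q^i}, for s ∈ F_q[x], satisfy C_{ts}(z) = C_t(C_s(z)) for all s, t ∈ F_q[x]. -/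
noncomputable section

/-- The Carlitz module: `C_s(z) = Σ_{i=0}^{deg s} (e_i(s)/D_i) z^{q^i}` for `s ∈ F_q[x]`,
a polynomial in `z` over `F_q(x)`. -/
def carlitzMod (F : Type*) [Field F] [Fintype F] (q : ℕ) (s : Polynomial F) :
    Polynomial (RatFunc F) :=
  ∑ i ∈ Finset.range (s.natDegree + 1),
    Polynomial.C
        ((carlitzE F (RatFunc.X : RatFunc F) i).eval
            (algebraMap (Polynomial F) (RatFunc F) s) / Dfac q (RatFunc.X : RatFunc F) i)
      * Polynomial.X ^ q ^ i

namespace CarlitzAux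

open Polynomial
set_option linter.unusedSectionVars false

variable (F : Type*) [Field F] [Fintype F]

/-- the element of `F_q(x)` given by the "polynomial of degree < i" with coefficients `c`. -/
def mm (i : ℕ) (c : Fin i → F) : RatFunc F :=
  ∑ j : Fin i, algebraMap F (RatFunc F) (c j) * (RatFunc.X : RatFunc F) ^ (j : ℕ)

/-- the corresponding actual polynomial -/
def pp (i : ℕ) (c : Fin i → F) : Polynomial F :=
  ∑ j : Fin i, Polynomial.C (c j) * Polynomial.X ^ (j : ℕ)

lemma mm_eq_algebraMap_pp (i : ℕ) (c : Fin i → F) :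
    mm F i c = algebraMap (Polynomial F) (RatFunc F) (pp F i c) := by
  rw [mm, pp, map_sum]
  refine Finset.sum_congr rfl fun j _ => ?_
  rw [map_mul, map_pow, RatFunc.algebraMap_C, RatFunc.algebraMap_X, RatFunc.algebraMap_eq_C]

lemma pp_coeff (i : ℕ) (c : Fin i → F) (j : Fin i) : (pp F i c).coeff (j : ℕ) = c j := by
  rw [pp, finset_sum_coeff, Finset.sum_eq_single j]
  · simp
  · intro b _ hb
    rw [coeff_C_mul, coeff_X_pow, if_neg (fun h => hb (Fin.ext h.symm)), mul_zero]
  · simp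

lemma pp_coeff_ge (i : ℕ) (c : Fin i → F) (k : ℕ) (hk : i ≤ k) : (pp F i c).coeff k = 0 := by
  rw [pp, finset_sum_coeff]
  refine Finset.sum_eq_zero fun j _ => ?_
  rw [coeff_C_mul, coeff_X_pow, if_neg (by have := j.isLt; omega), mul_zero]

lemma mm_inj (i : ℕ) : Function.Injective (mm F i) := by
  intro c c' h
  rw [mm_eq_algebraMap_pp, mm_eq_algebraMap_pp] at h
  have h2 := RatFunc.algebraMap_injective F h
  funext j
  rw [← pp_coeff F i c j, ← pp_coeff F i c' j, h2]

lemma mm_add (i : ℕ) (c c' : Fin i → F) : mm F i (c + c') = mm F i c + mm F i c' := by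
  rw [mm, mm, mm, ← Finset.sum_add_distrib]
  refine Finset.sum_congr rfl fun j _ => ?_
  simp [map_add, add_mul]

lemma mm_zero (i : ℕ) : mm F i 0 = 0 := by simp [mm]

lemma mm_smul (i : ℕ) (a : F) (c : Fin i → F) :
    mm F i (a • c) = algebraMap F (RatFunc F) a * mm F i c := by
  rw [mm, mm, Finset.mul_sum]
  refine Finset.sum_congr rfl fun j _ => ?_
  simp [map_mul, mul_assoc]

local notation "x" => (RatFunc.X : RatFunc F)
local notation "Q" => Fintype.card F

/-- shorthand for the Carlitz `e_i` over `F_q(x)` -/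
def e (i : ℕ) : Polynomial (RatFunc F) := carlitzE F x i

lemma e_eq (i : ℕ) : e F i = ∏ c : Fin i → F, (X - C (mm F i c)) := rfl

lemma e_monic (i : ℕ) : (e F i).Monic := by
  rw [e_eq]; exact monic_prod_of_monic _ _ fun c _ => monic_X_sub_C _

lemma e_natDegree (i : ℕ) : (e F i).natDegree = Q ^ i := by
  rw [e_eq, natDegree_prod _ _ (fun c _ => X_sub_C_ne_zero _)]
  simp [natDegree_X_sub_C, Fintype.card_fun]

lemma e_eval (i : ℕ) (a : RatFunc F) :
    (e F i).eval a = ∏ c : Fin i → F, (a - mm F i c) := by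
  rw [e_eq, eval_prod]; simp

lemma e_eval_mm_add (i : ℕ) (c : Fin i → F) (b : RatFunc F) :
    (e F i).eval (mm F i c + b) = (e F i).eval b := by
  rw [e_eval, e_eval]
  refine (Fintype.prod_equiv (Equiv.addRight c) _ _ fun c' => ?_).symm
  rw [Equiv.coe_addRight, mm_add]
  ring

lemma e_eval_zero (i : ℕ) : (e F i).eval 0 = 0 := by
  rw [e_eval]
  exact Finset.prod_eq_zero (Finset.mem_univ 0) (by rw [mm_zero, sub_zero])

lemma e_eval_mm (i : ℕ) (c : Fin i → F) : (e F i).eval (mm F i c) = 0 := by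
  have := e_eval_mm_add F i c 0
  rw [add_zero] at this
  rw [this, e_eval_zero]

lemma vanish (i : ℕ) (P : Polynomial (RatFunc F)) (hdeg : P.natDegree < Q ^ i)
    (hroots : ∀ c : Fin i → F, P.eval (mm F i c) = 0) : P = 0 := by
  refine P.eq_zero_of_natDegree_lt_card_of_eval_eq_zero (mm_inj F i) hroots ?_
  simpa [Fintype.card_fun] using hdeg

lemma card_pos : 0 < Q := Fintype.card_pos

lemma e_zero_eq : e F 0 = X := by
  rw [e_eq]
  rw [Finset.prod_eq_single_of_mem (default : Fin 0 → F) (Finset.mem_univ _)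
    (fun b _ hb => absurd (Subsingleton.elim b default) hb)]
  simp [mm]

/-- additivity of `e_i` as a function on `F_q(x)`. -/
lemma e_eval_add (i : ℕ) (a b : RatFunc F) :
    (e F i).eval (a + b) = (e F i).eval a + (e F i).eval b := by
  rcases Nat.eq_zero_or_pos i with rfl | hi
  · simp [e_zero_eq]
  set P : Polynomial (RatFunc F) :=
    (e F i).comp (X + C b) - e F i - C ((e F i).eval b) with hP
  have hcomp_monic : ((e F i).comp (X + C b)).Monic :=
    (e_monic F i).comp (monic_X_add_C b) (by simp)
  have hdeg : ((e F i).comp (X + C b)).natDegree = (e F i).natDegree := by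
    rw [natDegree_comp, natDegree_X_add_C, mul_one]
  have hPz : P = 0 := by
    rcases eq_or_ne P 0 with h0 | h0
    · exact h0
    refine vanish F i P ?_ fun c => ?_
    · have h1 : ((e F i).comp (X + C b) - e F i).degree < ((e F i).natDegree : ℕ∞) := by
        have := degree_sub_lt (p := (e F i).comp (X + C b)) (q := e F i)
          (by rw [degree_eq_natDegree hcomp_monic.ne_zero,
            degree_eq_natDegree (e_monic F i).ne_zero, hdeg])
          hcomp_monic.ne_zero
          (by rw [show ((e F i).comp (X + C b)).leadingCoeff = 1 from hcomp_monic,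
            show (e F i).leadingCoeff = 1 from e_monic F i])
        rwa [degree_eq_natDegree hcomp_monic.ne_zero, hdeg] at this
      have h2 : P.degree < ((e F i).natDegree : ℕ∞) := by
        rw [hP]
        refine lt_of_le_of_lt (degree_sub_le _ _) (max_lt h1 ?_)
        refine lt_of_le_of_lt degree_C_le ?_
        rw [e_natDegree]
        exact WithBot.coe_lt_coe.mpr (pow_pos (card_pos F) i)
      rw [← e_natDegree F i]
      exact (natDegree_lt_iff_degree_lt h0).mpr h2
    · simp only [hP, eval_sub, eval_comp, eval_add, eval_X, eval_C]
      rw [e_eval_mm_add, e_eval_mm, sub_zero, sub_self]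
  have := congrArg (fun p => Polynomial.eval a p) hPz
  simp only [hP, eval_sub, eval_comp, eval_add, eval_X, eval_C, eval_zero] at this
  linear_combination this

lemma algebraMap_pow_card (a : F) :
    algebraMap F (RatFunc F) a ^ Q = algebraMap F (RatFunc F) a := by
  rw [← map_pow, FiniteField.pow_card]

lemma algebraMap_pow_card_pow (a : F) (n : ℕ) :
    algebraMap F (RatFunc F) a ^ Q ^ n = algebraMap F (RatFunc F) a := by
  rw [← map_pow, FiniteField.pow_card_pow]

/-- `F_q`-homogeneity of `e_i` as a function on `F_q(x)`. -/
lemma e_eval_smul (i : ℕ) (a : F) (u : RatFunc F) :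
    (e F i).eval (algebraMap F (RatFunc F) a * u)
      = algebraMap F (RatFunc F) a * (e F i).eval u := by
  rcases eq_or_ne a 0 with rfl | ha
  · simp [e_eval_zero]
  have hbij : Function.Bijective (fun c : Fin i → F => a • c) := by
    constructor
    · intro c c' h
      funext j
      have := congrFun h j
      simpa [ha] using mul_left_cancel₀ ha this
    · intro c
      exact ⟨a⁻¹ • c, by funext j; simp [mul_inv_cancel_left₀ ha]⟩
  rw [e_eval, e_eval]
  rw [show (∏ c : Fin i → F, (algebraMap F (RatFunc F) a * u - mm F i c))
      = ∏ c : Fin i → F, (algebraMap F (RatFunc F) a * u - mm F i (a • c)) from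
    (Fintype.prod_bijective _ hbij _ _ fun c => rfl).symm]
  have : ∀ c : Fin i → F, algebraMap F (RatFunc F) a * u - mm F i (a • c)
      = algebraMap F (RatFunc F) a * (u - mm F i c) := by
    intro c
    rw [mm_smul]
    ring
  rw [Finset.prod_congr rfl fun c _ => this c, Finset.prod_mul_distrib,
    Finset.prod_const, Finset.card_univ, Fintype.card_fun, Fintype.card_fin,
    algebraMap_pow_card_pow]

lemma algebraMap_eq_mm (s : Polynomial F) (i : ℕ) (h : s.natDegree < i) :
    algebraMap (Polynomial F) (RatFunc F) s = mm F i (fun j => s.coeff (j : ℕ)) := by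
  rw [mm_eq_algebraMap_pp]
  congr 1
  rw [pp]
  conv_lhs => rw [s.as_sum_range' i h]
  rw [Fin.sum_univ_eq_sum_range (fun j => Polynomial.C (s.coeff j) * Polynomial.X ^ j)]
  refine Finset.sum_congr rfl fun j _ => ?_
  rw [C_mul_X_pow_eq_monomial]

lemma e_eval_algebraMap_eq_zero (s : Polynomial F) (i : ℕ) (h : s.natDegree < i) :
    (e F i).eval (algebraMap (Polynomial F) (RatFunc F) s) = 0 := by
  rw [algebraMap_eq_mm F s i h, e_eval_mm]

/-- `d i = e_i(x^i)`. -/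
def d (i : ℕ) : RatFunc F := (e F i).eval (x ^ i)

lemma d_ne_zero (i : ℕ) : d F i ≠ 0 := by
  rw [d, e_eval]
  refine Finset.prod_ne_zero_iff.mpr fun c _ => sub_ne_zero_of_ne fun h => ?_
  rw [show (x : RatFunc F) ^ i
      = algebraMap (Polynomial F) (RatFunc F) (Polynomial.X ^ i) by
    rw [map_pow, RatFunc.algebraMap_X], mm_eq_algebraMap_pp] at h
  have := RatFunc.algebraMap_injective F h
  have h1 := congrArg (fun p => Polynomial.coeff p i) this
  simp only [coeff_X_pow, if_pos rfl] at h1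
  rw [pp_coeff_ge F i c i le_rfl] at h1
  exact one_ne_zero h1

instance : Infinite (RatFunc F) :=
  Infinite.of_injective _ (RatFunc.algebraMap_injective F)

lemma e_comp_X_add_C (i : ℕ) (b : RatFunc F) :
    (e F i).comp (X + C b) = e F i + C ((e F i).eval b) := by
  apply Polynomial.funext
  intro r
  rw [eval_comp]
  simp only [eval_add, eval_X, eval_C]
  rw [e_eval_add]

lemma e_derivative (i : ℕ) : (e F i).derivative = C ((e F i).derivative.eval 0) := by
  have h1 : ∀ b r : RatFunc F, (e F i).derivative.eval (r + b) = (e F i).derivative.eval r := by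
    intro b r
    have := congrArg Polynomial.derivative (e_comp_X_add_C F i b)
    rw [derivative_comp, derivative_add, derivative_X, derivative_C, add_zero, one_mul,
      derivative_add, derivative_C, add_zero] at this
    have := congrArg (fun p => Polynomial.eval r p) this
    simpa [eval_comp] using this
  apply Polynomial.funext
  intro r
  have := h1 r 0
  rw [zero_add] at this
  rw [this, eval_C]

lemma e_separable (i : ℕ) : ((e F i)).Separable := by
  rw [e_eq]
  exact (separable_prod_X_sub_C_iff).mpr (mm_inj F i)

lemma e_derivative_eval_zero_ne (i : ℕ) : (e F i).derivative.eval 0 ≠ 0 := by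
  intro h
  have hd : (e F i).derivative = 0 := by rw [e_derivative, h, map_zero]
  have := e_separable F i
  rw [Polynomial.Separable, hd] at this
  have hu : IsUnit (e F i) := (isCoprime_zero_right).mp this
  have := natDegree_eq_zero_of_isUnit hu
  rw [e_natDegree] at this
  exact (pow_pos (card_pos F) i).ne' this

lemma Q_cast_ratfunc_zero : ((Q : ℕ) : RatFunc F) = 0 := by
  rw [← map_natCast (algebraMap F (RatFunc F)) Q, FiniteField.cast_card_eq_zero, map_zero]

lemma Q_cast_poly_zero : ((Q : ℕ) : Polynomial (RatFunc F)) = 0 := by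
  rw [← map_natCast (C : RatFunc F →+* Polynomial (RatFunc F)) Q, Q_cast_ratfunc_zero, map_zero]

lemma sum_pow_Q {ι : Type*} (s : Finset ι) (f : ι → Polynomial (RatFunc F)) :
    (∑ i ∈ s, f i) ^ Q = ∑ i ∈ s, (f i) ^ Q := by
  set p := ringChar F with hpdef
  haveI : CharP F p := ringChar.charP F
  obtain ⟨n, hp, hcard⟩ := FiniteField.card F p
  haveI : Fact p.Prime := ⟨hp⟩
  haveI : CharP (RatFunc F) p :=
    charP_of_injective_algebraMap (R := F) (A := RatFunc F) (RingHom.injective _) p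
  haveI : CharP (Polynomial (RatFunc F)) p := by
    refine charP_of_injective_algebraMap (R := RatFunc F) (A := Polynomial (RatFunc F)) ?_ p
    rw [Polynomial.algebraMap_eq]
    exact Polynomial.C_injective
  rw [hcard]
  exact sum_pow_char_pow p n s f

/-- The key lemma: the polynomial identity
`e_{i+1}(x·T) = x e_{i+1}(T) + [i+1] e_i(T)^q` together with the Carlitz
factorial recursion `e_{i+1}(x^{i+1}) = [i+1] e_i(x^i)^q`. -/
lemma key (i : ℕ) :
    (e F (i+1)).comp (C x * X) = C x * e F (i+1) + C (brk Q x (i+1)) * (e F i) ^ Q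
      ∧ d F (i+1) = brk Q x (i+1) * (d F i) ^ Q := by
  have hx : (x : RatFunc F) ≠ 0 := RatFunc.X_ne_zero
  set γ : RatFunc F := d F (i+1) / d F i ^ Q with hγ
  set lam : RatFunc F := x ^ Q ^ (i+1) - x - γ with hlam
  set H : Polynomial (RatFunc F) :=
    (e F (i+1)).comp (C x * X) - C x * e F (i+1) - C γ * (e F i) ^ Q - C lam * e F (i+1)
    with hH
  have hdQ : (d F i) ^ Q ≠ 0 := pow_ne_zero _ (d_ne_zero F i)
  have hγd : γ * d F i ^ Q = d F (i+1) := div_mul_cancel₀ _ hdQ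
  have hcompdeg : ((e F (i+1)).comp (C x * X)).natDegree = Q ^ (i+1) := by
    rw [natDegree_comp, natDegree_C_mul_X _ hx, mul_one, e_natDegree]
  have hlcCX : (C (x : RatFunc F) * X).leadingCoeff = x := by simp
  have hlc : ((e F (i+1)).comp (C x * X)).leadingCoeff = x ^ Q ^ (i+1) := by
    rw [leadingCoeff_comp (by rw [natDegree_C_mul_X _ hx]; exact one_ne_zero),
      show (e F (i+1)).leadingCoeff = 1 from e_monic F (i+1), one_mul, hlcCX, e_natDegree]
  have hcomp_coeff : ((e F (i+1)).comp (C x * X)).coeff (Q ^ (i+1)) = x ^ Q ^ (i+1) := by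
    conv_lhs => rw [← hcompdeg]
    rw [coeff_natDegree, hlc]
  have hpowdeg : ((e F i) ^ Q).natDegree = Q ^ (i+1) := by
    rw [natDegree_pow, e_natDegree, ← pow_succ']
  have hpow_coeff : ((e F i) ^ Q).coeff (Q ^ (i+1)) = 1 := by
    conv_lhs => rw [← hpowdeg]
    rw [coeff_natDegree, leadingCoeff_pow, show (e F i).leadingCoeff = 1 from e_monic F i,
      one_pow]
  have he1_coeff : (e F (i+1)).coeff (Q ^ (i+1)) = 1 := by
    conv_lhs => rw [← e_natDegree F (i+1)]
    exact (e_monic F (i+1)).coeff_natDegree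
  have hHcoeff : H.coeff (Q ^ (i+1)) = 0 := by
    simp only [hH, coeff_sub, coeff_C_mul, hcomp_coeff, he1_coeff, hpow_coeff, mul_one]
    rw [hlam]; ring
  have hHdeg : H.natDegree ≤ Q ^ (i+1) := by
    refine le_trans (natDegree_sub_le _ _) (max_le (le_trans (natDegree_sub_le _ _)
      (max_le (le_trans (natDegree_sub_le _ _) (max_le ?_ ?_)) ?_)) ?_)
    · exact le_of_eq hcompdeg
    · exact le_trans (natDegree_C_mul_le _ _) (by rw [e_natDegree])
    · exact le_trans (natDegree_C_mul_le _ _) (le_of_eq hpowdeg)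
    · exact le_trans (natDegree_C_mul_le _ _) (by rw [e_natDegree])
  have hH0 : H = 0 := by
    rcases eq_or_ne H 0 with h0 | h0
    · exact h0
    refine vanish F (i+1) H (lt_of_le_of_ne hHdeg fun hEq => h0 ?_) fun c => ?_
    · exact leadingCoeff_eq_zero.mp (by rw [leadingCoeff, hEq, hHcoeff])
    · set c' : Fin i → F := fun j => c j.castSucc with hc'
      set a : F := c (Fin.last i) with ha
      have hsplit : mm F (i+1) c = mm F i c' + algebraMap F (RatFunc F) a * x ^ i := by
        rw [mm, Fin.sum_univ_castSucc]
        rfl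
      have hshift : mm F (i+1) (Fin.cases 0 c') = (x : RatFunc F) * mm F i c' := by
        rw [show mm F (i+1) (Fin.cases 0 c')
            = ∑ j : Fin (i+1), algebraMap F (RatFunc F) (Fin.cases 0 c' j) * x ^ (j : ℕ)
          from rfl, Fin.sum_univ_succ]
        simp only [Fin.cases_zero, Fin.cases_succ, map_zero, zero_mul, pow_zero, mul_one,
          zero_add]
        rw [mm, Finset.mul_sum]
        refine Finset.sum_congr rfl fun j _ => ?_
        rw [Fin.val_succ, pow_succ]
        ring
      have heval1 : (e F (i+1)).eval ((x : RatFunc F) * mm F (i+1) c)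
          = algebraMap F (RatFunc F) a * d F (i+1) := by
        have hrw : (x : RatFunc F) * mm F (i+1) c
            = mm F (i+1) (Fin.cases 0 c') + algebraMap F (RatFunc F) a * x ^ (i+1) := by
          rw [hsplit, mul_add, ← hshift, pow_succ]
          ring
        rw [hrw, e_eval_add, e_eval_mm, zero_add, e_eval_smul, d]
      have heval2 : (e F i).eval (mm F (i+1) c) = algebraMap F (RatFunc F) a * d F i := by
        rw [hsplit, e_eval_add, e_eval_mm, zero_add, e_eval_smul, d]
      simp only [hH, eval_sub, eval_mul, eval_comp, eval_C, eval_X, eval_pow]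
      rw [heval1, heval2, e_eval_mm, mul_pow, algebraMap_pow_card,
        mul_left_comm γ, hγd]
      ring
  have hδne : (e F (i+1)).derivative.eval 0 ≠ 0 := e_derivative_eval_zero_ne F (i+1)
  set δ : RatFunc F := (e F (i+1)).derivative.eval 0 with hδ
  have hderE : Polynomial.derivative (e F (i+1)) = C δ := e_derivative F (i+1)
  have hlam0 : lam = 0 := by
    have hder := congrArg Polynomial.derivative hH0
    rw [hH] at hder
    rw [derivative_sub, derivative_sub, derivative_sub, derivative_comp,
      derivative_C_mul_X, derivative_C_mul, derivative_C_mul, derivative_C_mul,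
      derivative_pow, hderE, C_comp, derivative_zero] at hder
    rw [Q_cast_ratfunc_zero, map_zero] at hder
    simp only [zero_mul, mul_zero, sub_zero] at hder
    have := congrArg (fun p => Polynomial.eval 0 p) hder
    simp only [eval_sub, eval_mul, eval_C, eval_zero] at this
    have hlamδ : lam * δ = 0 := by linear_combination -this
    exact (mul_eq_zero.mp hlamδ).resolve_right hδne
  have hγval : γ = brk Q x (i+1) := by
    rw [brk, ← sub_eq_zero]
    rw [hlam] at hlam0
    linear_combination -hlam0
  have h3 : (e F (i+1)).comp (C x * X) - C x * e F (i+1) - C γ * (e F i) ^ Q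
      - C lam * e F (i+1) = 0 := by rw [← hH]; exact hH0
  constructor
  · rw [← hγval]
    have h4 : C lam * e F (i+1) = 0 := by rw [hlam0, map_zero, zero_mul]
    linear_combination h3 + h4
  · rw [← hγval, ← hγd]

lemma d_zero : d F 0 = 1 := by rw [d, e_zero_eq, pow_zero, eval_X]

lemma d_eq_Dfac : ∀ i, d F i = Dfac Q x i
  | 0 => by rw [d_zero, Dfac]
  | (i+1) => by
      rw [(key F i).2, show Dfac Q x (i+1) = brk Q x (i+1) * Dfac Q x i ^ Q from rfl,
        d_eq_Dfac i]

lemma Dfac_ne_zero (i : ℕ) : Dfac Q x i ≠ 0 := d_eq_Dfac F i ▸ d_ne_zero F i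

lemma brk_ne_zero (i : ℕ) : brk Q x (i+1) ≠ 0 := by
  intro h
  apply Dfac_ne_zero F (i+1)
  rw [show Dfac Q x (i+1) = brk Q x (i+1) * Dfac Q x i ^ Q from rfl, h, zero_mul]

/-- The coefficients of the Carlitz module. -/
def A (s : Polynomial F) (i : ℕ) : RatFunc F :=
  (e F i).eval (algebraMap (Polynomial F) (RatFunc F) s) / Dfac Q x i

lemma carlitzMod_eq (s : Polynomial F) :
    carlitzMod F Q s = ∑ i ∈ Finset.range (s.natDegree + 1), C (A F s i) * X ^ Q ^ i := rfl

lemma A_eq_zero (s : Polynomial F) (i : ℕ) (h : s.natDegree < i) : A F s i = 0 := by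
  rw [A, e_eval_algebraMap_eq_zero F s i h, zero_div]

lemma carlitzMod_eq_range (s : Polynomial F) (n : ℕ) (h : s.natDegree < n) :
    carlitzMod F Q s = ∑ i ∈ Finset.range n, C (A F s i) * X ^ Q ^ i := by
  rw [carlitzMod_eq]
  refine Finset.sum_subset (Finset.range_subset_range.mpr h) fun i hi hni => ?_
  rw [A_eq_zero F s i ?_, map_zero, zero_mul]
  simp only [Finset.mem_range] at hni
  omega

lemma A_add (s t : Polynomial F) (i : ℕ) : A F (s + t) i = A F s i + A F t i := by
  rw [A, A, A, map_add, e_eval_add, add_div]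

lemma carlitzMod_add (s t : Polynomial F) :
    carlitzMod F Q (s + t) = carlitzMod F Q s + carlitzMod F Q t := by
  set n := max s.natDegree t.natDegree + 1 with hn
  rw [carlitzMod_eq_range F (s+t) n
      (Nat.lt_succ_of_le (le_trans (natDegree_add_le s t) le_rfl)),
    carlitzMod_eq_range F s n (Nat.lt_succ_of_le (le_max_left _ _)),
    carlitzMod_eq_range F t n (Nat.lt_succ_of_le (le_max_right _ _)),
    ← Finset.sum_add_distrib]
  exact Finset.sum_congr rfl fun i _ => by rw [A_add, C_add, add_mul]

lemma A_C_mul (a : F) (s : Polynomial F) (i : ℕ) :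
    A F (Polynomial.C a * s) i = algebraMap F (RatFunc F) a * A F s i := by
  rw [A, A, map_mul, show algebraMap (Polynomial F) (RatFunc F) (Polynomial.C a)
      = algebraMap F (RatFunc F) a by rw [RatFunc.algebraMap_C, RatFunc.algebraMap_eq_C],
    e_eval_smul, mul_div_assoc]

lemma carlitzMod_C_mul (a : F) (s : Polynomial F) :
    carlitzMod F Q (Polynomial.C a * s)
      = C (algebraMap F (RatFunc F) a) * carlitzMod F Q s := by
  rw [carlitzMod_eq_range F (Polynomial.C a * s) (s.natDegree + 1)
      (Nat.lt_succ_of_le (natDegree_C_mul_le a s)), carlitzMod_eq, Finset.mul_sum]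
  exact Finset.sum_congr rfl fun i _ => by rw [A_C_mul, C_mul, mul_assoc]

lemma carlitzMod_one : carlitzMod F Q 1 = X := by
  rw [carlitzMod_eq]
  simp only [natDegree_one, zero_add, Finset.sum_range_one, pow_zero, pow_one]
  rw [A, map_one, e_zero_eq, eval_X, show Dfac Q x 0 = 1 from rfl, div_one, C_1, one_mul]

lemma carlitzMod_C (a : F) : carlitzMod F Q (Polynomial.C a)
    = C (algebraMap F (RatFunc F) a) * X := by
  rw [show (Polynomial.C a : Polynomial F) = Polynomial.C a * 1 by rw [mul_one],
    carlitzMod_C_mul, carlitzMod_one]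

lemma carlitzMod_zero : carlitzMod F Q 0 = 0 := by
  rw [show (0 : Polynomial F) = Polynomial.C 0 by rw [map_zero], carlitzMod_C]
  simp

lemma carlitzMod_X : carlitzMod F Q Polynomial.X = C x * X + X ^ Q := by
  rw [carlitzMod_eq]
  simp only [natDegree_X]
  rw [Finset.sum_range_succ, Finset.sum_range_one]
  congr 1
  · rw [A, e_zero_eq, eval_X, RatFunc.algebraMap_X, show Dfac Q x 0 = 1 from rfl, div_one,
      pow_zero, pow_one]
  · rw [A, RatFunc.algebraMap_X, show (e F 1).eval x = d F 1 by rw [d, pow_one],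
      d_eq_Dfac, div_self (Dfac_ne_zero F 1), C_1, one_mul, pow_one]

lemma A_X_mul_zero (s : Polynomial F) : A F (Polynomial.X * s) 0 = x * A F s 0 := by
  rw [A, A, e_zero_eq, eval_X, eval_X, map_mul, RatFunc.algebraMap_X,
    show Dfac Q x 0 = 1 from rfl, div_one, div_one]

lemma A_X_mul_succ (s : Polynomial F) (j : ℕ) :
    A F (Polynomial.X * s) (j+1) = x * A F s (j+1) + A F s j ^ Q := by
  set u : RatFunc F := algebraMap (Polynomial F) (RatFunc F) s with hu
  have h5 : (e F (j+1)).eval (x * u)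
      = x * (e F (j+1)).eval u + brk Q x (j+1) * ((e F j).eval u) ^ Q := by
    have := congrArg (fun p => Polynomial.eval u p) (key F j).1
    simpa [eval_comp] using this
  rw [A, A, A, map_mul, RatFunc.algebraMap_X, ← hu, h5,
    show Dfac Q x (j+1) = brk Q x (j+1) * Dfac Q x j ^ Q from rfl]
  have hb := brk_ne_zero F j
  have hd := Dfac_ne_zero F j
  field_simp
  rw [div_pow, mul_assoc _ (Dfac Q x j ^ Q), mul_div_cancel₀ _ (pow_ne_zero _ hd)]

lemma carlitzMod_X_mul (s : Polynomial F) :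
    carlitzMod F Q (Polynomial.X * s) = (carlitzMod F Q Polynomial.X).comp (carlitzMod F Q s) := by
  have hQ0 : Q ≠ 0 := (card_pos F).ne'
  rcases eq_or_ne s 0 with rfl | hs
  · rw [mul_zero, carlitzMod_zero, carlitzMod_X]
    rw [add_comp, mul_comp, C_comp, X_comp, pow_comp, X_comp]
    rw [mul_zero, zero_pow hQ0, add_zero]
  · set N := s.natDegree with hN
    have hdeg : (Polynomial.X * s).natDegree = N + 1 := by
      rw [natDegree_mul X_ne_zero hs, natDegree_X, add_comm]
    -- right hand side
    rw [carlitzMod_X, add_comp, mul_comp, C_comp, X_comp, pow_comp, X_comp]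
    rw [carlitzMod_eq F s, ← hN]
    rw [sum_pow_Q]
    have hrw2 : ∀ j, (C (A F s j) * X ^ Q ^ j) ^ Q = C (A F s j ^ Q) * X ^ Q ^ (j+1) := by
      intro j
      rw [mul_pow, ← C_pow, ← pow_mul, ← pow_succ]
    rw [Finset.sum_congr rfl fun j _ => hrw2 j]
    -- left hand side
    rw [carlitzMod_eq F (Polynomial.X * s), hdeg, Finset.mul_sum]
    have hrw3 : ∀ j, C (A F (Polynomial.X * s) (j+1)) * X ^ Q ^ (j+1)
        = C (x * A F s (j+1)) * X ^ Q ^ (j+1) + C (A F s j ^ Q) * X ^ Q ^ (j+1) := by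
      intro j
      rw [A_X_mul_succ, C_add, add_mul]
    rw [Finset.sum_range_succ' (fun k => C (A F (Polynomial.X * s) k) * X ^ Q ^ k) (N+1)]
    rw [Finset.sum_congr rfl fun j _ => hrw3 j, Finset.sum_add_distrib]
    rw [A_X_mul_zero]
    -- now match the two `x *` sums
    have hxsum : (∑ j ∈ Finset.range (N+1), C (x * A F s (j+1)) * X ^ Q ^ (j+1))
          + C (x * A F s 0) * X ^ Q ^ 0
        = ∑ j ∈ Finset.range (N+1), C x * (C (A F s j) * X ^ Q ^ j) := by
      rw [Finset.sum_range_succ (fun j => C (x * A F s (j+1)) * X ^ Q ^ (j+1)) N]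
      rw [A_eq_zero F s (N+1) (by omega), mul_zero, map_zero, zero_mul, add_zero]
      rw [Finset.sum_range_succ' (fun j => C x * (C (A F s j) * X ^ Q ^ j)) N]
      congr 1
      · exact Finset.sum_congr rfl fun j _ => by rw [C_mul, mul_assoc]
      · rw [C_mul, mul_assoc]
    calc (∑ j ∈ Finset.range (N+1), C (x * A F s (j+1)) * X ^ Q ^ (j+1))
          + (∑ j ∈ Finset.range (N+1), C (A F s j ^ Q) * X ^ Q ^ (j+1))
          + C (x * A F s 0) * X ^ Q ^ 0
        = ((∑ j ∈ Finset.range (N+1), C (x * A F s (j+1)) * X ^ Q ^ (j+1))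
            + C (x * A F s 0) * X ^ Q ^ 0)
          + (∑ j ∈ Finset.range (N+1), C (A F s j ^ Q) * X ^ Q ^ (j+1)) := by ring
      _ = (∑ j ∈ Finset.range (N+1), C x * (C (A F s j) * X ^ Q ^ j))
          + (∑ j ∈ Finset.range (N+1), C (A F s j ^ Q) * X ^ Q ^ (j+1)) := by rw [hxsum]

lemma carlitzMod_mul_aux (t s : Polynomial F) :
    carlitzMod F Q (t * s) = (carlitzMod F Q t).comp (carlitzMod F Q s) := by
  induction t using Polynomial.induction_on with
  | C a => rw [carlitzMod_C_mul, carlitzMod_C, mul_comp, C_comp, X_comp]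
  | add p q hp hq => rw [add_mul, carlitzMod_add, hp, hq, carlitzMod_add, add_comp]
  | monomial n a ih =>
      have hX : (Polynomial.C a * Polynomial.X ^ (n+1) : Polynomial F)
          = Polynomial.X * (Polynomial.C a * Polynomial.X ^ n) := by ring
      rw [hX, mul_assoc, carlitzMod_X_mul, ih, ← Polynomial.comp_assoc, ← carlitzMod_X_mul]

end CarlitzAux

/-- `C_{ts}(z) = C_t(C_s(z))` for all `s, t ∈ F_q[x]`. -/
theorem carlitzMod_mul {F : Type*} [Field F] [Fintype F]
    (q : ℕ) (hq : q = Fintype.card F) (s t : Polynomial F) :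
    carlitzMod F q (t * s) = (carlitzMod F q t).comp (carlitzMod F q s) := by
  subst hq
  exact CarlitzAux.carlitzMod_mul_aux F t s
end
end

section
/- For a delta operator δ = τ^{-1}δ_0 (δ_0 linear invariant, δ_0(t) = 0, δ_0(t^{q^n}) = c_n t^{q^n} with c_n ≠ 0 for n ≥ 1), there exists a unique basic sequence {P_n}: F_q-linear polynomials with deg P_n = q^n, P_0(1) = 1, P_n(1) = 0 for n ≥ 1, δ_0 P_0 = 0, and δ_0 P_n = [n] P_{n-1}^q for n ≥ 1. -/
noncomputable section

/-- The Frobenius `τ` on `F_q`-linear polynomials `Σ a_k t^{q^k}` (encoded as `ℕ →₀ L`):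
`τ u = u^q`, i.e. `Σ a_k^q t^{q^{k+1}}`. -/
def frob {L : Type*} [CommRing L] (q : ℕ) (u : ℕ →₀ L) : ℕ →₀ L :=
  u.sum fun k a => Finsupp.single (k + 1) (a ^ q)

/-- Evaluation of the `F_q`-linear polynomial `Σ a_k t^{q^k}` at `t = 1`. -/
def eval1 {L : Type*} [CommRing L] (u : ℕ →₀ L) : L :=
  u.sum fun _ a => a

section Aux

variable {L : Type*} [Field L]

/-- Coefficients of a shifted sum of singles. -/
lemma shiftSum_apply_zero (u : ℕ →₀ L) (g : ℕ → L → L) :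
    (u.sum fun k a => Finsupp.single (k + 1) (g k a)) 0 = 0 := by
  rw [Finsupp.sum_apply]
  apply Finset.sum_eq_zero
  intro k _
  simp [Finsupp.single_apply]

lemma shiftSum_apply_succ (u : ℕ →₀ L) (g : ℕ → L → L) (hg : ∀ k, g k 0 = 0) (j : ℕ) :
    (u.sum fun k a => Finsupp.single (k + 1) (g k a)) (j + 1) = g j (u j) := by
  rw [Finsupp.sum_apply, Finsupp.sum]
  have : ∀ k ∈ u.support, (Finsupp.single (k + 1) (g k (u k)) : ℕ →₀ L) (j + 1)
      = if k = j then g k (u k) else 0 := by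
    intro k _
    simp [Finsupp.single_apply]
  rw [Finset.sum_congr rfl this, Finset.sum_ite_eq' u.support j (fun k => g k (u k))]
  by_cases hj : j ∈ u.support
  · simp [hj]
  · simp only [hj, if_false]
    rw [Finsupp.notMem_support_iff.mp hj, hg]

lemma frob_apply_zero (q : ℕ) (u : ℕ →₀ L) : frob q u 0 = 0 :=
  shiftSum_apply_zero u (fun _ a => a ^ q)

lemma frob_apply_succ (q : ℕ) (hq0 : q ≠ 0) (u : ℕ →₀ L) (j : ℕ) :
    frob q u (j + 1) = (u j) ^ q :=
  shiftSum_apply_succ u (fun _ a => a ^ q) (fun _ => zero_pow hq0) j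

lemma eval1_single (n : ℕ) (a : L) : eval1 (Finsupp.single n a) = a := by
  simp [eval1, Finsupp.sum_single_index]

lemma eval1_add (u v : ℕ →₀ L) : eval1 (u + v) = eval1 u + eval1 v := by
  simp [eval1, Finsupp.sum_add_index']

lemma eval1_sub (u v : ℕ →₀ L) : eval1 (u - v) = eval1 u - eval1 v := by
  simp [eval1, Finsupp.sum_sub_index]

/-- If all coefficients of `u` in degrees `≥ 1` vanish, `u` is the constant term. -/
lemma eq_single_zero_of (u : ℕ →₀ L) (h : ∀ k, 1 ≤ k → u k = 0) :
    u = Finsupp.single 0 (u 0) := by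
  ext k
  cases k with
  | zero => simp
  | succ j => simp [Finsupp.single_apply, h (j + 1) (Nat.succ_le_succ (Nat.zero_le _))]

lemma eval1_eq_coeff_zero (u : ℕ →₀ L) (h : ∀ k, 1 ≤ k → u k = 0) :
    eval1 u = u 0 := by
  conv_lhs => rw [eq_single_zero_of u h]
  exact eval1_single 0 (u 0)

/-- One step of the basic-sequence recursion (all coefficients except the constant one). -/
def stepB (q : ℕ) (β : L) (c : ℕ → L) (u : ℕ →₀ L) : ℕ →₀ L :=
  u.sum fun k a => Finsupp.single (k + 1) (β * (c (k + 1))⁻¹ * a ^ q)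

lemma stepB_apply_zero (q : ℕ) (β : L) (c : ℕ → L) (u : ℕ →₀ L) :
    stepB q β c u 0 = 0 :=
  shiftSum_apply_zero u _

lemma stepB_apply_succ (q : ℕ) (hq0 : q ≠ 0) (β : L) (c : ℕ → L) (u : ℕ →₀ L) (j : ℕ) :
    stepB q β c u (j + 1) = β * (c (j + 1))⁻¹ * (u j) ^ q :=
  shiftSum_apply_succ u _ (fun k => by simp [zero_pow hq0]) j

/-- The basic sequence. -/
def basicP (q : ℕ) (β : ℕ → L) (c : ℕ → L) : ℕ → (ℕ →₀ L)
  | 0 => Finsupp.single 0 1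
  | n + 1 =>
      stepB q (β (n + 1)) c (basicP q β c n) +
        Finsupp.single 0 (-(eval1 (stepB q (β (n + 1)) c (basicP q β c n))))

lemma basicP_succ_apply_succ (q : ℕ) (hq0 : q ≠ 0) (β : ℕ → L) (c : ℕ → L) (n j : ℕ) :
    basicP q β c (n + 1) (j + 1)
      = β (n + 1) * (c (j + 1))⁻¹ * (basicP q β c n j) ^ q := by
  rw [basicP, Finsupp.add_apply, stepB_apply_succ q hq0, Finsupp.single_apply]
  simp

lemma basicP_eval1_succ (q : ℕ) (β : ℕ → L) (c : ℕ → L) (n : ℕ) :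
    eval1 (basicP q β c (n + 1)) = 0 := by
  rw [basicP, eval1_add, eval1_single]
  ring

end Aux

/-- Existence and uniqueness of the basic sequence of a delta operator
`δ = τ^{-1} δ₀`: here `δ₀` is a linear invariant operator on `F_q`-linear polynomials
over `L` (an extension of `K = F_q((x))`), i.e. `δ₀(t^{q^n}) = c_n t^{q^n}` with `c_0 = 0`
(that is `δ₀(t) = 0`) and `c_n ≠ 0` for `n ≥ 1`.  The basic sequence `{P_n}` satisfies
`deg P_n = q^n`, `P_0(1) = 1`, `P_n(1) = 0` for `n ≥ 1`, `δ₀ P_0 = 0`, and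
`δ₀ P_n = [n] P_{n-1}^q` for `n ≥ 1`. -/
theorem basic_sequence_exists_unique {F L : Type*} [Field F] [Fintype F] [Field L]
    [Algebra (LaurentSeries F) L] (q : ℕ) (hq : q = Fintype.card F)
    (c : ℕ → L) (hc0 : c 0 = 0) (hc : ∀ n, 1 ≤ n → c n ≠ 0)
    (δ₀ : (ℕ →₀ L) →ₗ[L] (ℕ →₀ L))
    (hδ₀ : ∀ n : ℕ, δ₀ (Finsupp.single n 1) = c n • Finsupp.single n 1) :
    ∃! P : ℕ → (ℕ →₀ L),
      (∀ n : ℕ, P n n ≠ 0 ∧ ∀ k, n < k → P n k = 0)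
      ∧ eval1 (P 0) = 1 ∧ (∀ n, 1 ≤ n → eval1 (P n) = 0)
      ∧ δ₀ (P 0) = 0
      ∧ ∀ n, 1 ≤ n →
          δ₀ (P n)
            = algebraMap (LaurentSeries F) L
                (brk q (HahnSeries.single (1 : ℤ) (1 : F)) n) • frob q (P (n - 1)) := by
  -- basic numerology
  have hq2 : 1 < q := hq ▸ Fintype.one_lt_card
  have hq0 : q ≠ 0 := by omega
  -- the scalars `β n = [n]` in `L` are nonzero for `n ≥ 1`
  set β : ℕ → L := fun n =>
    algebraMap (LaurentSeries F) L (brk q (HahnSeries.single (1 : ℤ) (1 : F)) n) with hβdef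
  have hβ : ∀ n, 1 ≤ n → β n ≠ 0 := by
    intro n hn
    have hbrk : brk q (HahnSeries.single (1 : ℤ) (1 : F)) n ≠ 0 := by
      rw [brk, sub_ne_zero, HahnSeries.single_pow]
      have hsm : (q ^ n • (1 : ℤ)) = ((q : ℤ)) ^ n := by simp
      rw [hsm]
      intro h
      have hco := congrArg (fun s : LaurentSeries F => s.coeff (1 : ℤ)) h
      have hne : (1 : ℤ) ≠ ((q : ℤ)) ^ n := by
        have h1 : 1 < q ^ n := Nat.one_lt_pow (by omega) hq2
        intro hcon
        have : ((q ^ n : ℕ) : ℤ) = 1 := by push_cast; exact hcon.symm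
        omega
      simp only [HahnSeries.coeff_single_of_ne hne, HahnSeries.coeff_single_same] at hco
      exact one_ne_zero hco.symm
    intro h0
    exact hbrk ((algebraMap (LaurentSeries F) L).injective (by rw [map_zero]; exact h0))
  -- δ₀ acts diagonally on coefficients
  have hδ : ∀ (u : ℕ →₀ L) (k : ℕ), δ₀ u k = c k * u k := by
    intro u k
    induction u using Finsupp.induction_linear with
    | zero => simp
    | add f g hf hg => rw [map_add, Finsupp.add_apply, hf, hg, Finsupp.add_apply]; ring
    | single a b =>
        have : (Finsupp.single a b : ℕ →₀ L) = b • Finsupp.single a 1 := by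
          rw [Finsupp.smul_single', mul_one]
        rw [this, map_smul, hδ₀ a, Finsupp.smul_apply, Finsupp.smul_apply, Finsupp.smul_apply]
        rcases eq_or_ne a k with rfl | hak
        · simp [Finsupp.single_apply]; ring
        · simp [Finsupp.single_apply, hak]
  set P : ℕ → (ℕ →₀ L) := basicP q β c with hPdef
  -- degree facts about P
  have hdeg : ∀ n : ℕ, P n n ≠ 0 ∧ ∀ k, n < k → P n k = 0 := by
    intro n
    induction n with
    | zero =>
        constructor
        · show (Finsupp.single 0 (1 : L)) 0 ≠ 0; simp
        · intro k hk
          show (Finsupp.single 0 (1 : L)) k = 0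
          rw [Finsupp.single_apply, if_neg (by omega)]
    | succ n ih =>
        constructor
        · rw [hPdef, basicP_succ_apply_succ q hq0]
          exact mul_ne_zero (mul_ne_zero (hβ (n + 1) (by omega))
            (inv_ne_zero (hc (n + 1) (by omega)))) (pow_ne_zero q ih.1)
        · intro k hk
          obtain ⟨j, rfl⟩ : ∃ j, k = j + 1 := ⟨k - 1, by omega⟩
          rw [hPdef, basicP_succ_apply_succ q hq0, ih.2 j (by omega), zero_pow hq0, mul_zero]
  -- eval1 facts
  have hev0 : eval1 (P 0) = 1 := by
    show eval1 (Finsupp.single 0 (1 : L)) = 1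
    exact eval1_single 0 1
  have hev : ∀ n, 1 ≤ n → eval1 (P n) = 0 := by
    intro n hn
    obtain ⟨m, rfl⟩ : ∃ m, n = m + 1 := ⟨n - 1, by omega⟩
    exact basicP_eval1_succ q β c m
  -- δ₀ facts
  have hd0 : δ₀ (P 0) = 0 := by
    show δ₀ (Finsupp.single 0 1) = 0
    rw [hδ₀ 0, hc0, zero_smul]
  have hdn : ∀ n, 1 ≤ n → δ₀ (P n) = β n • frob q (P (n - 1)) := by
    intro n hn
    obtain ⟨m, rfl⟩ : ∃ m, n = m + 1 := ⟨n - 1, by omega⟩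
    ext k
    rw [hδ]
    cases k with
    | zero =>
        rw [hc0, zero_mul, Finsupp.smul_apply]
        simp [frob_apply_zero]
    | succ j =>
        rw [Finsupp.smul_apply, Nat.add_sub_cancel, frob_apply_succ q hq0,
          hPdef, basicP_succ_apply_succ q hq0]
        rw [show c (j + 1) * (β (m + 1) * (c (j + 1))⁻¹ * (basicP q β c m j) ^ q)
            = β (m + 1) * (basicP q β c m j) ^ q * (c (j + 1) * (c (j + 1))⁻¹) by ring,
          mul_inv_cancel₀ (hc (j + 1) (by omega)), mul_one, smul_eq_mul]
  refine ⟨P, ⟨hdeg, hev0, hev, hd0, hdn⟩, ?_⟩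
  -- uniqueness
  rintro P' ⟨-, hev0', hev', hd0', hdn'⟩
  funext n
  induction n with
  | zero =>
      have hz : ∀ k, 1 ≤ k → P' 0 k = 0 := by
        intro k hk
        have h1 : c k * P' 0 k = 0 := by
          rw [← hδ]
          rw [hd0']
          simp
        rcases mul_eq_zero.mp h1 with h | h
        · exact absurd h (hc k hk)
        · exact h
      have h00 : P' 0 0 = 1 := by rw [← eval1_eq_coeff_zero (P' 0) hz]; exact hev0'
      have : P' 0 = Finsupp.single 0 (1 : L) := by
        rw [eq_single_zero_of (P' 0) hz, h00]
      exact this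
  | succ n ih =>
      have hrec : δ₀ (P' (n + 1)) = β (n + 1) • frob q (P n) := by
        have := hdn' (n + 1) (by omega)
        rw [Nat.add_sub_cancel, ih] at this
        exact this
      -- the coefficients in degrees ≥ 1 agree
      have hsame : ∀ k, 1 ≤ k → P' (n + 1) k = P (n + 1) k := by
        intro k hk
        obtain ⟨j, rfl⟩ : ∃ j, k = j + 1 := ⟨k - 1, by omega⟩
        have h1 : c (j + 1) * P' (n + 1) (j + 1) = β (n + 1) * (P n j) ^ q := by
          rw [← hδ, hrec, Finsupp.smul_apply, frob_apply_succ q hq0, smul_eq_mul]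
        have hcne := hc (j + 1) (Nat.succ_le_succ (Nat.zero_le _))
        have h2 : P' (n + 1) (j + 1) = β (n + 1) * (c (j + 1))⁻¹ * (P n j) ^ q := by
          field_simp
          rw [mul_comm] at h1
          exact h1
        rw [h2, hPdef, basicP_succ_apply_succ q hq0]
      -- then so does the constant term, since both have eval1 = 0
      have hw : ∀ k, 1 ≤ k → (P' (n + 1) - P (n + 1)) k = 0 := by
        intro k hk
        rw [Finsupp.sub_apply, hsame k hk, sub_self]
      have hwe : eval1 (P' (n + 1) - P (n + 1)) = 0 := by
        rw [eval1_sub, hev' (n + 1) (by omega), hev (n + 1) (by omega), sub_self]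
      have h0 : (P' (n + 1) - P (n + 1)) 0 = 0 := by
        rw [← eval1_eq_coeff_zero _ hw]; exact hwe
      have : P' (n + 1) - P (n + 1) = 0 := by
        rw [eq_single_zero_of _ hw, h0, Finsupp.single_zero]
      exact sub_eq_zero.mp this
end
end

section
/- Generalized Taylor formula: if f is an F_q-linear polynomial of degree ≤ q^n and {P_l} is the basic sequence of a delta operator δ, then f(st) = Σ_{l=0}^{n} ((δ_0^{(l)} f)(s) / D_l) P_l(t) for all s, t ∈ K. -/
noncomputable section

/-- Evaluation of the `F_q`-linear polynomial `Σ a_k t^{q^k}` at a point `t`. -/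
def evp {L : Type*} [CommRing L] (q : ℕ) (u : ℕ →₀ L) (t : L) : L :=
  u.sum fun k a => a * t ^ q ^ k

/-- Eigencoefficients of the operator `τ^l δ^l`. -/
def gtGam {L : Type*} [CommRing L] (q : ℕ) (c : ℕ → L) : ℕ → ℕ → L
  | 0, _ => 1
  | _ + 1, 0 => 0
  | l + 1, k + 1 => c (k + 1) * (gtGam q c l k) ^ q

lemma gtGam_eq_zero {L : Type*} [CommRing L] {q : ℕ} (hq : q ≠ 0) (c : ℕ → L) :
    ∀ l k, k < l → gtGam q c l k = 0 := by
  intro l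
  induction l with
  | zero => intro k h; omega
  | succ l ih =>
    intro k h
    cases k with
    | zero => rfl
    | succ k => rw [gtGam, ih k (by omega), zero_pow hq, mul_zero]

lemma gtGam_diag_ne_zero {L : Type*} [Field L] {q : ℕ} {c : ℕ → L}
    (hc : ∀ n, 1 ≤ n → c n ≠ 0) : ∀ l, gtGam q c l l ≠ 0 := by
  intro l
  induction l with
  | zero => exact one_ne_zero
  | succ l ih => exact mul_ne_zero (hc _ (by omega)) (pow_ne_zero _ ih)

lemma gt_sum_single_mul {L : Type*} [CommRing L] (u : ℕ →₀ L) (g : ℕ → L → L)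
    (v : ℕ → L) :
    ((u.sum fun k a => Finsupp.single k (g k a)).sum fun k a => a * v k)
      = u.sum fun k a => g k a * v k := by
  refine (Finsupp.sum_sum_index (h := fun k a => a * v k)
    (fun k => zero_mul _) (fun k b₁ b₂ => add_mul b₁ b₂ _)).trans ?_
  exact Finsupp.sum_congr fun k _ => by
    exact Finsupp.sum_single_index (h := fun k a => a * v k) (zero_mul _)

lemma gt_sum_single_apply {L : Type*} [CommRing L]
    (u : ℕ →₀ L) (g : ℕ → L → L) (hg : ∀ k, g k 0 = 0) (j : ℕ) :
    (u.sum fun k a => Finsupp.single k (g k a)) j = g j (u j) := by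
  rw [Finsupp.sum_apply, Finsupp.sum]
  simp only [Finsupp.single_apply]
  rw [Finset.sum_eq_single j]
  · rw [if_pos rfl]
  · intro b _ hb; rw [if_neg hb]
  · intro hj
    rw [Finsupp.notMem_support_iff.mp hj, hg, if_pos rfl]

/-- Generalized Taylor formula: if `f` is an `F_q`-linear polynomial of degree `≤ q^n` and
`{P_l}` is the basic sequence of the delta operator `δ = τ^{-1}δ₀`, then
`f(st) = Σ_{l=0}^{n} ((δ₀^{(l)} f)(s) / D_l) P_l(t)` for all `s, t ∈ K`,
where `δ₀^{(l)} = τ^l δ^l`. -/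
theorem generalized_taylor {F L : Type*} [Field F] [Fintype F] [Field L]
    [Algebra (LaurentSeries F) L]
    (p : ℕ) [Fact p.Prime] [CharP F p] [ExpChar L p] [PerfectRing L p]
    (q : ℕ) (hq : q = Fintype.card F)
    (c : ℕ → L) (hc0 : c 0 = 0) (hc : ∀ n, 1 ≤ n → c n ≠ 0)
    (δ₀ : (ℕ →₀ L) →ₗ[L] (ℕ →₀ L))
    (hδ₀ : ∀ n : ℕ, δ₀ (Finsupp.single n 1) = c n • Finsupp.single n 1)
    (δ : (ℕ →₀ L) → (ℕ →₀ L)) (hδ : ∀ u, frob q (δ u) = δ₀ u)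
    (P : ℕ → (ℕ →₀ L))
    (hPdeg : ∀ n : ℕ, P n n ≠ 0 ∧ ∀ k, n < k → P n k = 0)
    (hP01 : eval1 (P 0) = 1) (hP1 : ∀ n, 1 ≤ n → eval1 (P n) = 0)
    (hP0 : δ₀ (P 0) = 0)
    (hPn : ∀ n, 1 ≤ n →
      δ₀ (P n)
        = algebraMap (LaurentSeries F) L
            (brk q (HahnSeries.single (1 : ℤ) (1 : F)) n) • frob q (P (n - 1)))
    (f : ℕ →₀ L) (n : ℕ) (hf : ∀ k, n < k → f k = 0) :
    ∀ s t : LaurentSeries F,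
      evp q f (algebraMap (LaurentSeries F) L (s * t))
        = ∑ l ∈ Finset.range (n + 1),
            evp q ((frob q)^[l] (δ^[l] f)) (algebraMap (LaurentSeries F) L s)
              / algebraMap (LaurentSeries F) L
                  (Dfac q (HahnSeries.single (1 : ℤ) (1 : F)) l)
              * evp q (P l) (algebraMap (LaurentSeries F) L t) := by
  classical
  obtain ⟨m, hpp, hcard⟩ := FiniteField.card F p
  have hq2 : 2 ≤ q := by rw [hq]; exact Fintype.one_lt_card
  have hq0 : q ≠ 0 := by omega
  set x : LaurentSeries F := HahnSeries.single (1 : ℤ) (1 : F) with hx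
  set φ : LaurentSeries F →+* L := (algebraMap (LaurentSeries F) L) with hφ
  -- the `q`-power Frobenius as a ring equivalence
  have hqpm : q = p ^ (m : ℕ) := by rw [hq, hcard]
  let e : L ≃+* L := iterateFrobeniusEquiv L p (m : ℕ)
  have he : ∀ y : L, e y = y ^ q := by
    intro y; rw [hqpm]; rfl
  have hpow : ∀ a b : L, (a + b) ^ q = a ^ q + b ^ q := by
    intro a b; rw [← he, ← he, ← he, map_add]
  have hinj : ∀ a b : L, a ^ q = b ^ q → a = b := by
    intro a b h; exact e.injective (by rw [he, he]; exact h)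
  set ρ : L → L := ⇑e.symm with hρdef
  have hρ : ∀ y : L, (ρ y) ^ q = y := by
    intro y; rw [← he]; exact e.apply_symm_apply y
  -- frob basics
  have hfrob0 : frob q (0 : ℕ →₀ L) = 0 := Finsupp.sum_zero_index
  have hfrob_single : ∀ (k : ℕ) (a : L),
      frob q (Finsupp.single k a) = Finsupp.single (k + 1) (a ^ q) := by
    intro k a
    exact Finsupp.sum_single_index (by rw [zero_pow hq0, Finsupp.single_zero])
  have hfrob_add : ∀ u v : ℕ →₀ L, frob q (u + v) = frob q u + frob q v := by
    intro u v
    exact Finsupp.sum_add_index' (fun k => by rw [zero_pow hq0, Finsupp.single_zero])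
      (fun k a b => by rw [hpow, Finsupp.single_add])
  have hfrob_smul : ∀ (r : L) (u : ℕ →₀ L), frob q (r • u) = r ^ q • frob q u := by
    intro r u
    rw [frob, Finsupp.sum_smul_index (fun i => by rw [zero_pow hq0, Finsupp.single_zero]),
      frob, Finsupp.smul_sum]
    exact Finsupp.sum_congr fun k _ => by rw [mul_pow, Finsupp.smul_single, smul_eq_mul]
  have hfrob_apply : ∀ (u : ℕ →₀ L) (j : ℕ), frob q u (j + 1) = (u j) ^ q := by
    intro u j
    rw [frob, Finsupp.sum_apply, Finsupp.sum]
    simp only [Finsupp.single_apply]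
    rw [Finset.sum_eq_single j]
    · rw [if_pos rfl]
    · intro b _ hb; rw [if_neg (by omega)]
    · intro hj
      rw [Finsupp.notMem_support_iff.mp hj, if_pos rfl, zero_pow hq0]
  have hfrob_inj : ∀ u v : ℕ →₀ L, frob q u = frob q v → u = v := by
    intro u v h
    ext j
    exact hinj _ _ (by rw [← hfrob_apply, ← hfrob_apply, h])
  -- δ₀ and δ basics
  have hδ₀single : ∀ (k : ℕ) (a : L),
      δ₀ (Finsupp.single k a) = Finsupp.single k (c k * a) := by
    intro k a
    have h1 : Finsupp.single k a = a • Finsupp.single k (1 : L) := by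
      rw [Finsupp.smul_single, smul_eq_mul, mul_one]
    rw [h1, map_smul, hδ₀, smul_smul, Finsupp.smul_single, smul_eq_mul, mul_one, mul_comm]
  have hδ_zero : δ 0 = 0 := hfrob_inj _ _ (by rw [hδ, map_zero, hfrob0])
  have hδ_add : ∀ u v : ℕ →₀ L, δ (u + v) = δ u + δ v := fun u v =>
    hfrob_inj _ _ (by rw [hδ, map_add, hfrob_add, hδ, hδ])
  have hδ_single0 : ∀ a : L, δ (Finsupp.single 0 a) = 0 := fun a =>
    hfrob_inj _ _ (by rw [hδ, hδ₀single, hc0, zero_mul, Finsupp.single_zero, hfrob0])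
  have hδ_single : ∀ (k : ℕ) (a : L),
      δ (Finsupp.single (k + 1) a) = Finsupp.single k (ρ (c (k + 1) * a)) := by
    intro k a
    apply hfrob_inj
    rw [hδ, hδ₀single, hfrob_single, hρ]
  -- the operator `A l = frob^l ∘ δ^l`
  have hstep : ∀ (l : ℕ) (w : ℕ →₀ L),
      (frob q)^[l + 1] (δ^[l + 1] w) = frob q ((frob q)^[l] (δ^[l] (δ w))) := by
    intro l w
    rw [Function.iterate_succ_apply δ l w, Function.iterate_succ_apply' (frob q) l]
  have hAsingle : ∀ (l k : ℕ) (a : L),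
      (frob q)^[l] (δ^[l] (Finsupp.single k a))
        = Finsupp.single k (a * gtGam q c l k) := by
    intro l
    induction l with
    | zero => intro k a; simp [gtGam]
    | succ l ih =>
      intro k a
      rw [hstep]
      cases k with
      | zero =>
        rw [hδ_single0, Function.iterate_fixed hδ_zero, Function.iterate_fixed hfrob0,
          hfrob0]
        rw [show gtGam q c (l + 1) 0 = 0 from rfl, mul_zero, Finsupp.single_zero]
      | succ k =>
        rw [hδ_single, ih, hfrob_single, mul_pow, hρ,
          show gtGam q c (l + 1) (k + 1) = c (k + 1) * (gtGam q c l k) ^ q from rfl]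
        congr 1
        ring
  have hAadd : ∀ (l : ℕ) (u v : ℕ →₀ L),
      (frob q)^[l] (δ^[l] (u + v))
        = (frob q)^[l] (δ^[l] u) + (frob q)^[l] (δ^[l] v) := by
    intro l
    induction l with
    | zero => intro u v; rfl
    | succ l ih =>
      intro u v
      rw [hstep, hstep, hstep, hδ_add, ih, hfrob_add]
  have hA : ∀ (l : ℕ) (u : ℕ →₀ L),
      (frob q)^[l] (δ^[l] u) = u.sum fun k a => Finsupp.single k (a * gtGam q c l k) := by
    intro l u
    induction u using Finsupp.induction_linear with
    | zero =>
      rw [Function.iterate_fixed hδ_zero, Function.iterate_fixed hfrob0,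
        Finsupp.sum_zero_index]
    | add u v hu hv =>
      rw [hAadd, hu, hv, ← Finsupp.sum_add_index'
        (fun k => by rw [zero_mul, Finsupp.single_zero])
        (fun k a b => by rw [add_mul, Finsupp.single_add])]
    | single k a =>
      rw [hAsingle, Finsupp.sum_single_index (by rw [zero_mul, Finsupp.single_zero])]
  -- the functionals B l
  set B : ℕ → (ℕ →₀ L) →ₗ[L] L :=
    fun l => Finsupp.linearCombination L (fun k => gtGam q c l k) with hBdef
  have hB : ∀ (l : ℕ) (u : ℕ →₀ L), B l u = u.sum fun k a => a * gtGam q c l k := by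
    intro l u
    rw [hBdef, Finsupp.linearCombination_apply]
    rfl
  have heval1 : ∀ (l : ℕ) (u : ℕ →₀ L), eval1 ((frob q)^[l] (δ^[l] u)) = B l u := by
    intro l u
    rw [hA, eval1, hB]
    refine (Finsupp.sum_sum_index (h := fun _ a => a) (fun _ => rfl)
      (fun _ _ _ => rfl)).trans ?_
    exact Finsupp.sum_congr fun k _ =>
      Finsupp.sum_single_index (h := fun _ a => a) rfl
  have heval1frob : ∀ u : ℕ →₀ L, eval1 (frob q u) = (eval1 u) ^ q := by
    intro u
    rw [frob, eval1, eval1]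
    refine (Finsupp.sum_sum_index (h := fun _ a => a) (fun _ => rfl)
      (fun _ _ _ => rfl)).trans ?_
    have h1 : (u.sum fun k a => (Finsupp.single (k + 1) (a ^ q)).sum fun _ b => b)
        = u.sum fun k a => e a := by
      refine Finsupp.sum_congr fun k _ => ?_
      rw [Finsupp.sum_single_index (h := fun _ b => b) rfl, he]
    rw [h1, ← map_finsuppSum e, he]
  -- B on the basic sequence
  have hδP0 : δ (P 0) = 0 := hfrob_inj _ _ (by rw [hδ, hP0, hfrob0])
  have hδPsucc : ∀ mm : ℕ, δ (P (mm + 1)) = ρ (φ (brk q x (mm + 1))) • P mm := by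
    intro mm
    apply hfrob_inj
    rw [hδ, hPn (mm + 1) (by omega), hfrob_smul, hρ]
    rfl
  have hBP : ∀ l mm : ℕ, B l (P mm) = if l = mm then φ (Dfac q x l) else 0 := by
    intro l
    induction l with
    | zero =>
      intro mm
      have h0 : B 0 (P mm) = eval1 (P mm) := by
        rw [hB, eval1]
        exact Finsupp.sum_congr fun k _ => by
          rw [show gtGam q c 0 k = 1 from rfl, mul_one]
      cases mm with
      | zero => rw [h0, hP01, if_pos rfl, show Dfac q x 0 = 1 from rfl, map_one]
      | succ mm => rw [h0, hP1 _ (by omega), if_neg (by omega)]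
    | succ l ih =>
      intro mm
      have key : B (l + 1) (P mm) = (B l (δ (P mm))) ^ q := by
        rw [← heval1, ← heval1, hstep, heval1frob]
      cases mm with
      | zero =>
        rw [key, hδP0, map_zero, zero_pow hq0, if_neg (by omega)]
      | succ mm =>
        rw [key, hδPsucc, map_smul, smul_eq_mul, mul_pow, hρ, ih]
        by_cases hlm : l = mm
        · subst hlm
          rw [if_pos rfl, if_pos rfl, ← map_pow, ← map_mul]
          rfl
        · rw [if_neg hlm, if_neg (by omega), zero_pow hq0, mul_zero]
  -- nonvanishing of the Carlitz factorials
  have hbrk_ne : ∀ i : ℕ, 1 ≤ i → brk q x i ≠ 0 := by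
    intro i hi
    rw [brk, sub_ne_zero]
    intro hcon
    have hgt : 1 < q ^ i := by
      calc 1 < q := hq2
      _ ≤ q ^ i := Nat.le_self_pow (by omega) q
    have h1 : ((x : LaurentSeries F) ^ q ^ i).coeff ((q ^ i : ℕ) • (1 : ℤ)) = 1 := by
      rw [hx, HahnSeries.single_pow, HahnSeries.coeff_single_same, one_pow]
    have hne : ((q ^ i : ℕ) • (1 : ℤ)) ≠ (1 : ℤ) := by
      rw [nsmul_eq_mul, mul_one]
      exact_mod_cast (by omega : (q ^ i : ℕ) ≠ 1)
    have h2 : (x : LaurentSeries F).coeff ((q ^ i : ℕ) • (1 : ℤ)) = 0 := by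
      rw [hx]
      exact HahnSeries.coeff_single_of_ne hne
    rw [hcon] at h1
    rw [h1] at h2
    exact one_ne_zero h2
  have hDne : ∀ l : ℕ, φ (Dfac q x l) ≠ 0 := by
    have hD : ∀ l : ℕ, Dfac q x l ≠ 0 := by
      intro l
      induction l with
      | zero => exact one_ne_zero
      | succ l ih => exact mul_ne_zero (hbrk_ne (l + 1) (by omega)) (pow_ne_zero _ ih)
    intro l hcon
    exact hD l (φ.injective (by rw [hcon, map_zero]))
  -- top-coefficient extraction and vanishing lemma
  have htop : ∀ (N : ℕ) (w : ℕ →₀ L), (∀ k, N < k → w k = 0) →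
      B N w = w N * gtGam q c N N := by
    intro N w hw
    rw [hB, Finsupp.sum]
    rw [Finset.sum_eq_single N]
    · intro b hb hbN
      have hble : b ≤ N := by
        by_contra hcon
        exact Finsupp.mem_support_iff.mp hb (hw b (by omega))
      rw [gtGam_eq_zero hq0 c N b (by omega), mul_zero]
    · intro hN
      rw [Finsupp.notMem_support_iff.mp hN, zero_mul]
  have hvanish : ∀ (N : ℕ) (w : ℕ →₀ L), (∀ k, N < k → w k = 0) →
      (∀ l, l ≤ N → B l w = 0) → w = 0 := by
    intro N
    induction N with
    | zero =>
      intro w hsupp hBw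
      have h0 : w 0 = 0 := by
        have := htop 0 w hsupp
        rw [hBw 0 le_rfl] at this
        have := mul_eq_zero.mp this.symm
        rcases this with h | h
        · exact h
        · exact absurd h (gtGam_diag_ne_zero hc 0)
      ext k
      cases k with
      | zero => exact h0
      | succ k => exact hsupp (k + 1) (by omega)
    | succ N ih =>
      intro w hsupp hBw
      have hN1 : w (N + 1) = 0 := by
        have := htop (N + 1) w hsupp
        rw [hBw (N + 1) le_rfl] at this
        rcases mul_eq_zero.mp this.symm with h | h
        · exact h
        · exact absurd h (gtGam_diag_ne_zero hc (N + 1))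
      refine ih w ?_ ?_
      · intro k hk
        rcases Nat.lt_or_ge k (N + 2) with h | h
        · have : k = N + 1 := by omega
          rw [this]; exact hN1
        · exact hsupp k (by omega)
      · intro l hl
        exact hBw l (by omega)
  -- expansion of a polynomial of degree ≤ n in the basic sequence
  have hexpand : ∀ u : ℕ →₀ L, (∀ k, n < k → u k = 0) →
      u = ∑ l ∈ Finset.range (n + 1), (B l u / φ (Dfac q x l)) • P l := by
    intro u hu
    have hw := hvanish n (u - ∑ l ∈ Finset.range (n + 1), (B l u / φ (Dfac q x l)) • P l)
      ?_ ?_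
    · exact sub_eq_zero.mp hw
    · intro k hk
      rw [Finsupp.sub_apply, hu k hk, Finset.sum_apply']
      rw [Finset.sum_eq_zero, sub_zero]
      intro l hl
      rw [Finsupp.smul_apply,
        (hPdeg l).2 k (lt_of_le_of_lt (Finset.mem_range_succ_iff.mp hl) hk), smul_zero]
    · intro l hl
      rw [map_sub, map_sum]
      simp only [map_smul, smul_eq_mul]
      rw [Finset.sum_eq_single l]
      · rw [hBP, if_pos rfl, div_mul_cancel₀ _ (hDne l), sub_self]
      · intro b hb hbl
        rw [hBP, if_neg (fun hh => hbl hh.symm), mul_zero]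
      · intro hcon
        exact absurd (Finset.mem_range_succ_iff.mpr hl) hcon
  -- finale
  intro s t
  set S : L := φ s with hS
  set T : L := φ t with hT
  set u : ℕ →₀ L := f.sum fun k a => Finsupp.single k (a * S ^ q ^ k) with hu
  have hucoeff : ∀ j, u j = f j * S ^ q ^ j := by
    intro j
    rw [hu]
    exact gt_sum_single_apply (g := fun k a => a * S ^ q ^ k) f (fun k => zero_mul _) j
  have husupp : ∀ k, n < k → u k = 0 := by
    intro k hk; rw [hucoeff, hf k hk, zero_mul]
  have hlhs : evp q f (S * T) = evp q u T := by
    rw [hu, evp, evp, gt_sum_single_mul f (fun k a => a * S ^ q ^ k) (fun k => T ^ q ^ k)]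
    exact Finsupp.sum_congr fun k _ => by rw [mul_pow, mul_assoc]
  have hnum : ∀ l : ℕ, B l u = evp q ((frob q)^[l] (δ^[l] f)) S := by
    intro l
    rw [hB, hu, gt_sum_single_mul f (fun k a => a * S ^ q ^ k) (fun k => gtGam q c l k),
      hA, evp, gt_sum_single_mul f (fun k a => a * gtGam q c l k) (fun k => S ^ q ^ k)]
    exact Finsupp.sum_congr fun k _ => by ring
  have hevp : ∀ (w : ℕ →₀ L),
      evp q w T = Finsupp.linearCombination L (fun k => T ^ q ^ k) w := by
    intro w
    rw [evp, Finsupp.linearCombination_apply]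
    rfl
  rw [map_mul, ← hS, ← hT, hlhs, hevp]
  conv_lhs => rw [hexpand u husupp]
  rw [map_sum]
  refine Finset.sum_congr rfl fun l hl => ?_
  rw [map_smul, smul_eq_mul, ← hevp, hnum l]
end
end
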